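/- arXiv:1909.05396 — 5 statements merged into one kernel-verified Lean document; each statement's English description precedes it below -/
import Mathlib

section
/- For every n ∈ ℕ, every finite signed Borel measure μ on X, and every λ̄ ∈ (ᾱ, ∞), the map λ ↦ μP_λ^n (the n-fold iterate of the Markov operator P_λ applied to μ) is continuous at λ̄ in the Fortet–Mourier norm: ‖μP_λ^n − μP_{λ̄}^n‖_FM → 0 as λ → λ̄ within (ᾱ, ∞). -/
open MeasureTheory Real Filter

/-- The integral of a real-valued function against a finite signed measure,
defined through the Jordan decomposition. -/
noncomputable def sInt {α : Type*} [MeasurableSpace α]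
    (μ : MeasureTheory.SignedMeasure α) (f : α → ℝ) : ℝ :=
  (∫ x, f x ∂μ.toJordanDecomposition.posPart) -
    ∫ x, f x ∂μ.toJordanDecomposition.negPart


lemma aux_exp_int {a : ℝ} (ha : 0 < a) :
    ∫ t in Set.Ici (0:ℝ), Real.exp (-(a * t)) = 1 / a := by
  rw [MeasureTheory.integral_Ici_eq_integral_Ioi]
  have hderiv : ∀ t ∈ Set.Ici (0:ℝ),
      HasDerivAt (fun t : ℝ => -(1/a) * Real.exp (-(a * t))) (Real.exp (-(a * t))) t := by
    intro t _
    have h1 : HasDerivAt (fun t : ℝ => -(a * t)) (-a) t := by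
      simpa using ((hasDerivAt_id t).const_mul (-a))
    have h2 := h1.exp
    have h3 := h2.const_mul (-(1/a))
    convert h3 using 1
    · rfl
    · rfl
    · field_simp
  have hint : IntegrableOn (fun t : ℝ => Real.exp (-(a * t))) (Set.Ioi 0) := by
    simpa [neg_mul] using exp_neg_integrableOn_Ioi 0 ha
  have htend : Tendsto (fun t : ℝ => -(1/a) * Real.exp (-(a * t))) atTop (nhds 0) := by
    have h1 : Tendsto (fun t : ℝ => a * t) atTop atTop :=
      Tendsto.const_mul_atTop ha tendsto_id
    have h2 : Tendsto (fun t : ℝ => -(a * t)) atTop atBot :=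
      tendsto_neg_atTop_atBot.comp h1
    have h3 : Tendsto (fun t : ℝ => Real.exp (-(a * t))) atTop (nhds 0) :=
      Real.tendsto_exp_atBot.comp h2
    simpa using h3.const_mul (-(1/a))
  have := integral_Ioi_of_hasDerivAt_of_tendsto' (a := 0)
    (fun x hx => hderiv x hx) hint htend
  rw [this]
  simp

lemma aux_exp_intOn {a : ℝ} (ha : 0 < a) :
    IntegrableOn (fun t : ℝ => Real.exp (-(a * t))) (Set.Ici 0) := by
  rw [integrableOn_Ici_iff_integrableOn_Ioi]
  simpa [neg_mul] using exp_neg_integrableOn_Ioi 0 ha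

lemma aux_w_int {a : ℝ} (ha : 0 < a) :
    ∫ t in Set.Ici (0:ℝ), a * Real.exp (-(a * t)) = 1 := by
  rw [MeasureTheory.integral_const_mul, aux_exp_int ha]
  field_simp

lemma aux_w_intOn {a : ℝ} (ha : 0 < a) :
    IntegrableOn (fun t : ℝ => a * Real.exp (-(a * t))) (Set.Ici 0) :=
  (aux_exp_intOn ha).const_mul a

lemma aux_D {a b : ℝ} (ha : 0 < a) (hab : a ≤ b) :
    ∫ t in Set.Ici (0:ℝ), |a * Real.exp (-(a * t)) - b * Real.exp (-(b * t))|
      ≤ 2 * (b - a) / a := by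
  have hb : 0 < b := ha.trans_le hab
  have hUint : IntegrableOn
      (fun t : ℝ => (b - a) * Real.exp (-(a * t))
        + b * (Real.exp (-(a * t)) - Real.exp (-(b * t)))) (Set.Ici 0) := by
    exact ((aux_exp_intOn ha).const_mul (b - a)).add
      (((aux_exp_intOn ha).sub (aux_exp_intOn hb)).const_mul b)
  have hptw : ∀ t ∈ Set.Ici (0:ℝ),
      |a * Real.exp (-(a * t)) - b * Real.exp (-(b * t))|
        ≤ (b - a) * Real.exp (-(a * t))
          + b * (Real.exp (-(a * t)) - Real.exp (-(b * t))) := by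
    intro t ht
    have hexp : Real.exp (-(b * t)) ≤ Real.exp (-(a * t)) := by
      apply Real.exp_le_exp.2
      have : a * t ≤ b * t := mul_le_mul_of_nonneg_right hab ht
      linarith
    have hkey : a * Real.exp (-(a * t)) - b * Real.exp (-(b * t))
        = (a - b) * Real.exp (-(a * t))
          + b * (Real.exp (-(a * t)) - Real.exp (-(b * t))) := by ring
    rw [hkey]
    calc |(a - b) * Real.exp (-(a * t))
          + b * (Real.exp (-(a * t)) - Real.exp (-(b * t)))|
        ≤ |(a - b) * Real.exp (-(a * t))|
          + |b * (Real.exp (-(a * t)) - Real.exp (-(b * t)))| := abs_add_le _ _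
      _ = (b - a) * Real.exp (-(a * t))
          + b * (Real.exp (-(a * t)) - Real.exp (-(b * t))) := by
          rw [abs_mul, abs_mul, abs_of_nonpos (by linarith : a - b ≤ 0),
            abs_of_nonneg (Real.exp_pos _).le, abs_of_nonneg hb.le,
            abs_of_nonneg (by linarith : (0:ℝ) ≤ Real.exp (-(a*t)) - Real.exp (-(b*t)))]
          ring
  have h1 : ∫ t in Set.Ici (0:ℝ), |a * Real.exp (-(a * t)) - b * Real.exp (-(b * t))|
      ≤ ∫ t in Set.Ici (0:ℝ), ((b - a) * Real.exp (-(a * t))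
        + b * (Real.exp (-(a * t)) - Real.exp (-(b * t)))) := by
    apply integral_mono_of_nonneg
    · exact Filter.Eventually.of_forall fun t => abs_nonneg _
    · exact hUint
    · exact ae_restrict_of_forall_mem measurableSet_Ici hptw
  have h2 : ∫ t in Set.Ici (0:ℝ), ((b - a) * Real.exp (-(a * t))
      + b * (Real.exp (-(a * t)) - Real.exp (-(b * t)))) = 2 * (b - a) / a := by
    have e1 : ∫ t in Set.Ici (0:ℝ), (b - a) * Real.exp (-(a * t)) = (b - a) * (1/a) := by
      rw [MeasureTheory.integral_const_mul, aux_exp_int ha]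
    have e2 : ∫ t in Set.Ici (0:ℝ), b * (Real.exp (-(a * t)) - Real.exp (-(b * t)))
        = b * (1/a - 1/b) := by
      rw [MeasureTheory.integral_const_mul,
        integral_sub (aux_exp_intOn ha) (aux_exp_intOn hb), aux_exp_int ha, aux_exp_int hb]
    have i1 : IntegrableOn (fun t : ℝ => (b - a) * Real.exp (-(a * t))) (Set.Ici 0) :=
      (aux_exp_intOn ha).const_mul _
    have i2 : IntegrableOn
        (fun t : ℝ => b * (Real.exp (-(a * t)) - Real.exp (-(b * t)))) (Set.Ici 0) :=
      ((aux_exp_intOn ha).sub (aux_exp_intOn hb)).const_mul _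
    rw [integral_add i1 i2, e1, e2]
    field_simp
    ring
  linarith

/-- For every `n ∈ ℕ`, every finite signed Borel measure `μ` on `X` and
every `λ̄ ∈ (ᾱ, ∞)`, the map `λ ↦ μP_λ^n` is continuous at `λ̄` in the FM norm:
`‖μP_λ^n − μP_{λ̄}^n‖_FM → 0` as `λ → λ̄` within `(ᾱ, ∞)`.  Here `μP_λ^n` is paired with a
test function `f` through the duality `⟨f, μP_λ^n⟩ = ⟨P_λ^n f, μ⟩`, where `P_λ f(x) =
∫₀^∞ λ e^{−λt} ∫_Θ p(S(t,x),θ) f(w_θ(S(t,x))) dθ dt` and `P_λ^n` is its `n`-fold iterate. -/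
theorem stmt_8
    {H : Type*} [NormedAddCommGroup H] [NormedSpace ℝ H] [CompleteSpace H]
    [SecondCountableTopology H] [MeasurableSpace H] [BorelSpace H]
    {Θ : Type*} [TopologicalSpace Θ] [MeasurableSpace Θ] [BorelSpace Θ]
    (ϑ : Measure Θ) [SigmaFinite ϑ]
    (X : Set H) (hXc : IsClosed X) (hXne : X.Nonempty)
    (S : ℝ → X → X)
    (hS0 : ∀ x, S 0 x = x)
    (hSadd : ∀ s t : ℝ, 0 ≤ s → 0 ≤ t → ∀ x, S (s + t) x = S s (S t x))
    (hScont : ContinuousOn (fun q : ℝ × X => S q.1 q.2) (Set.Ici 0 ×ˢ Set.univ))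
    (w : Θ → X → X) (hw : Continuous fun q : X × Θ => w q.2 q.1)
    (p : X → Θ → ℝ) (hpcont : Continuous fun q : X × Θ => p q.1 q.2)
    (hp0 : ∀ x θ, 0 ≤ p x θ) (hp1 : ∀ x, ∫ θ, p x θ ∂ϑ = 1)
    (L Lw Lp : ℝ) (α : ℝ) (hL : 0 < L) (hLw : 0 < Lw) (hLp : 0 < Lp)
    (hA2 : ∀ t : ℝ, 0 ≤ t → ∀ x y : X,
      ‖(S t x : H) - S t y‖ ≤ L * Real.exp (α * t) * ‖(x : H) - y‖)
    (hA3 : ∀ x y : X, ∫ θ, p x θ * ‖(w θ x : H) - w θ y‖ ∂ϑ ≤ Lw * ‖(x : H) - y‖)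
    (hA4 : ∀ x y : X, ∫ θ, |p x θ - p y θ| ∂ϑ ≤ Lp * ‖(x : H) - y‖)
    (n : ℕ) (μ : MeasureTheory.SignedMeasure X) (lbar : ℝ) (hlbar : max 0 α < lbar) :
    Tendsto (fun lam : ℝ =>
        sSup {r : ℝ | ∃ f : X → ℝ, (∀ z, |f z| ≤ 1) ∧ LipschitzWith 1 f ∧
          r = |sInt μ ((fun g : X → ℝ => fun x =>
                  ∫ t in Set.Ici (0 : ℝ), lam * Real.exp (-(lam * t)) *
                    ∫ θ, p (S t x) θ * g (w θ (S t x)) ∂ϑ)^[n] f) -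
               sInt μ ((fun g : X → ℝ => fun x =>
                  ∫ t in Set.Ici (0 : ℝ), lbar * Real.exp (-(lbar * t)) *
                    ∫ θ, p (S t x) θ * g (w θ (S t x)) ∂ϑ)^[n] f)|})
      (nhdsWithin lbar (Set.Ioi (max 0 α))) (nhds 0) := by
  classical
  obtain ⟨x0, hx0⟩ := hXne
  have hlbar0 : (0:ℝ) < lbar := lt_of_le_of_lt (le_max_left _ _) hlbar
  -- integrability of p in θ
  have hpInt : ∀ y : X, Integrable (fun θ => p y θ) ϑ := by
    intro y
    by_contra h
    have h1 := hp1 y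
    rw [MeasureTheory.integral_undef h] at h1
    exact one_ne_zero h1.symm
  have hSmCont : Continuous fun q : ℝ × X => S (max q.1 0) q.2 := by
    apply hScont.comp_continuous
      ((continuous_fst.max continuous_const).prodMk continuous_snd)
    intro q; exact ⟨(le_max_right q.1 0 : (0:ℝ) ≤ max q.1 0), Set.mem_univ _⟩
  set J : (X → ℝ) → X → ℝ := fun g y => ∫ θ, p y θ * g (w θ y) ∂ϑ with hJ
  set T : ℝ → (X → ℝ) → X → ℝ := fun l g x =>
    ∫ t in Set.Ici (0:ℝ), l * Real.exp (-(l * t)) * J g (S (max t 0) x) with hT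
  -- inner integrand integrable
  have hInnerInt : ∀ g : X → ℝ, Measurable g → (∀ z, |g z| ≤ 1) →
      ∀ y : X, Integrable (fun θ => p y θ * g (w θ y)) ϑ := by
    intro g hg hgb y
    have hm : Measurable fun θ => p y θ * g (w θ y) := by
      have h1 : Measurable fun θ => p y θ :=
        (hpcont.comp (continuous_const.prodMk continuous_id)).measurable
      have h2 : Measurable fun θ => g (w θ y) :=
        hg.comp (hw.comp (continuous_const.prodMk continuous_id)).measurable
      exact h1.mul h2
    refine (hpInt y).mono' hm.aestronglyMeasurable ?_
    filter_upwards with θ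
    rw [Real.norm_eq_abs, abs_mul, abs_of_nonneg (hp0 y θ)]
    calc p y θ * |g (w θ y)| ≤ p y θ * 1 :=
          mul_le_mul_of_nonneg_left (hgb _) (hp0 y θ)
      _ = p y θ := mul_one _
  have hJbound : ∀ g : X → ℝ, Measurable g → (∀ z, |g z| ≤ 1) →
      ∀ y : X, |J g y| ≤ 1 := by
    intro g hg hgb y
    rw [hJ]
    calc |∫ θ, p y θ * g (w θ y) ∂ϑ| ≤ ∫ θ, |p y θ * g (w θ y)| ∂ϑ := by
          have := norm_integral_le_integral_norm (μ := ϑ) fun θ => p y θ * g (w θ y)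
          simpa only [Real.norm_eq_abs] using this
      _ ≤ ∫ θ, p y θ ∂ϑ := by
          apply integral_mono_of_nonneg
            (Filter.Eventually.of_forall fun θ => abs_nonneg _) (hpInt y)
          filter_upwards with θ
          rw [abs_mul, abs_of_nonneg (hp0 y θ)]
          calc p y θ * |g (w θ y)| ≤ p y θ * 1 :=
                mul_le_mul_of_nonneg_left (hgb _) (hp0 y θ)
            _ = p y θ := mul_one _
      _ = 1 := hp1 y
  have hJmeas : ∀ g : X → ℝ, Measurable g → Measurable (J g) := by
    intro g hg
    have hm : Measurable fun q : X × Θ => p q.1 q.2 * g (w q.2 q.1) :=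
      hpcont.measurable.mul (hg.comp hw.measurable)
    have hf : StronglyMeasurable
        (Function.uncurry fun (y : X) (θ : Θ) => p y θ * g (w θ y)) :=
      Measurable.stronglyMeasurable hm
    exact (hf.integral_prod_right (ν := ϑ)).measurable
  have hTmeas : ∀ (l : ℝ) (g : X → ℝ), Measurable g → Measurable (T l g) := by
    intro l g hg
    have h1 : Measurable fun q : X × ℝ => l * Real.exp (-(l * q.2)) :=
      (continuous_const.mul
        (Real.continuous_exp.comp (continuous_const.mul continuous_snd).neg)).measurable
    have h2 : Measurable fun q : X × ℝ => J g (S (max q.2 0) q.1) :=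
      (hJmeas g hg).comp (hSmCont.comp (continuous_snd.prodMk continuous_fst)).measurable
    have hf : StronglyMeasurable (Function.uncurry fun (x : X) (t : ℝ) =>
        l * Real.exp (-(l * t)) * J g (S (max t 0) x)) :=
      Measurable.stronglyMeasurable (h1.mul h2)
    exact (hf.integral_prod_right (ν := volume.restrict (Set.Ici 0))).measurable
  have hTInt : ∀ l : ℝ, 0 < l → ∀ g : X → ℝ, Measurable g → (∀ z, |g z| ≤ 1) → ∀ x : X,
      IntegrableOn (fun t => l * Real.exp (-(l * t)) * J g (S (max t 0) x))
        (Set.Ici 0) := by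
    intro l hl g hg hgb x
    have hm : Measurable fun t : ℝ => l * Real.exp (-(l * t)) * J g (S (max t 0) x) := by
      have h1 : Measurable fun t : ℝ => l * Real.exp (-(l * t)) :=
        (continuous_const.mul
          (Real.continuous_exp.comp (continuous_const.mul continuous_id).neg)).measurable
      have h2 : Measurable fun t : ℝ => J g (S (max t 0) x) :=
        (hJmeas g hg).comp (hSmCont.comp (continuous_id.prodMk continuous_const)).measurable
      exact h1.mul h2
    refine (aux_w_intOn hl).mono' hm.aestronglyMeasurable ?_
    filter_upwards with t
    rw [Real.norm_eq_abs, abs_mul]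
    have h1 : |l * Real.exp (-(l * t))| = l * Real.exp (-(l * t)) :=
      abs_of_nonneg (by positivity)
    rw [h1]
    calc l * Real.exp (-(l * t)) * |J g (S (max t 0) x)|
        ≤ l * Real.exp (-(l * t)) * 1 :=
          mul_le_mul_of_nonneg_left (hJbound g hg hgb _) (by positivity)
      _ = l * Real.exp (-(l * t)) := mul_one _
  have hTbound : ∀ l : ℝ, 0 < l → ∀ g : X → ℝ, Measurable g → (∀ z, |g z| ≤ 1) →
      ∀ x : X, |T l g x| ≤ 1 := by
    intro l hl g hg hgb x
    rw [hT]
    calc |∫ t in Set.Ici (0:ℝ), l * Real.exp (-(l * t)) * J g (S (max t 0) x)|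
        ≤ ∫ t in Set.Ici (0:ℝ), |l * Real.exp (-(l * t)) * J g (S (max t 0) x)| := by
          have := norm_integral_le_integral_norm (μ := volume.restrict (Set.Ici 0))
            fun t => l * Real.exp (-(l * t)) * J g (S (max t 0) x)
          simpa only [Real.norm_eq_abs] using this
      _ ≤ ∫ t in Set.Ici (0:ℝ), l * Real.exp (-(l * t)) := by
          apply integral_mono_of_nonneg
            (Filter.Eventually.of_forall fun t => abs_nonneg _) (aux_w_intOn hl)
          filter_upwards with t
          rw [abs_mul, abs_of_nonneg (show (0:ℝ) ≤ l * Real.exp (-(l * t)) by positivity)]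
          calc l * Real.exp (-(l * t)) * |J g (S (max t 0) x)|
              ≤ l * Real.exp (-(l * t)) * 1 :=
                mul_le_mul_of_nonneg_left (hJbound g hg hgb _) (by positivity)
            _ = l * Real.exp (-(l * t)) := mul_one _
      _ = 1 := aux_w_int hl
  have hTdiff : ∀ l : ℝ, 0 < l → ∀ g h : X → ℝ, Measurable g → (∀ z, |g z| ≤ 1) →
      Measurable h → (∀ z, |h z| ≤ 1) → ∀ ε : ℝ, (∀ z, |g z - h z| ≤ ε) →
      ∀ x : X, |T l g x - T l h x| ≤ ε := by
    intro l hl g h hg hgb hh hhb ε hε x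
    have hε0 : 0 ≤ ε := le_trans (abs_nonneg _) (hε ⟨x0, hx0⟩)
    have hJd : ∀ y : X, |J g y - J h y| ≤ ε := by
      intro y
      have hsub : J g y - J h y = ∫ θ, p y θ * (g (w θ y) - h (w θ y)) ∂ϑ := by
        rw [hJ]
        rw [← integral_sub (hInnerInt g hg hgb y) (hInnerInt h hh hhb y)]
        congr 1; funext θ; ring
      rw [hsub]
      calc |∫ θ, p y θ * (g (w θ y) - h (w θ y)) ∂ϑ|
          ≤ ∫ θ, |p y θ * (g (w θ y) - h (w θ y))| ∂ϑ := by
            have := norm_integral_le_integral_norm (μ := ϑ)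
              fun θ => p y θ * (g (w θ y) - h (w θ y))
            simpa only [Real.norm_eq_abs] using this
        _ ≤ ∫ θ, p y θ * ε ∂ϑ := by
            apply integral_mono_of_nonneg
              (Filter.Eventually.of_forall fun θ => abs_nonneg _)
              ((hpInt y).mul_const ε)
            filter_upwards with θ
            rw [abs_mul, abs_of_nonneg (hp0 y θ)]
            exact mul_le_mul_of_nonneg_left (hε _) (hp0 y θ)
        _ = ε := by rw [integral_mul_const, hp1, one_mul]
    have hsub : T l g x - T l h x = ∫ t in Set.Ici (0:ℝ),
        l * Real.exp (-(l * t)) * (J g (S (max t 0) x) - J h (S (max t 0) x)) := by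
      rw [hT]
      rw [← integral_sub (hTInt l hl g hg hgb x) (hTInt l hl h hh hhb x)]
      congr 1; funext t; ring
    rw [hsub]
    calc |∫ t in Set.Ici (0:ℝ),
          l * Real.exp (-(l * t)) * (J g (S (max t 0) x) - J h (S (max t 0) x))|
        ≤ ∫ t in Set.Ici (0:ℝ),
          |l * Real.exp (-(l * t)) * (J g (S (max t 0) x) - J h (S (max t 0) x))| := by
          have := norm_integral_le_integral_norm (μ := volume.restrict (Set.Ici 0))
            fun t => l * Real.exp (-(l * t)) * (J g (S (max t 0) x) - J h (S (max t 0) x))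
          simpa only [Real.norm_eq_abs] using this
      _ ≤ ∫ t in Set.Ici (0:ℝ), l * Real.exp (-(l * t)) * ε := by
          apply integral_mono_of_nonneg
            (Filter.Eventually.of_forall fun t => abs_nonneg _)
            ((aux_w_intOn hl).mul_const ε)
          filter_upwards with t
          rw [abs_mul, abs_of_nonneg (show (0:ℝ) ≤ l * Real.exp (-(l * t)) by positivity)]
          have h2 : |J g (S (max t 0) x) - J h (S (max t 0) x)| ≤ ε := hJd _
          exact mul_le_mul_of_nonneg_left h2 (by positivity)
      _ = ε := by rw [integral_mul_const, aux_w_int hl, one_mul]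
  have hTlamdiff : ∀ l₁ l₂ : ℝ, 0 < l₁ → 0 < l₂ → ∀ g : X → ℝ, Measurable g →
      (∀ z, |g z| ≤ 1) → ∀ x : X,
      |T l₁ g x - T l₂ g x| ≤ 2 * |l₁ - l₂| / min l₁ l₂ := by
    intro l₁ l₂ h₁ h₂ g hg hgb x
    have hsub : T l₁ g x - T l₂ g x = ∫ t in Set.Ici (0:ℝ),
        (l₁ * Real.exp (-(l₁ * t)) - l₂ * Real.exp (-(l₂ * t))) * J g (S (max t 0) x) := by
      rw [hT]
      rw [← integral_sub (hTInt l₁ h₁ g hg hgb x) (hTInt l₂ h₂ g hg hgb x)]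
      congr 1; funext t; ring
    have habs : ∫ t in Set.Ici (0:ℝ),
        |l₁ * Real.exp (-(l₁ * t)) - l₂ * Real.exp (-(l₂ * t))|
          ≤ 2 * |l₁ - l₂| / min l₁ l₂ := by
      rcases le_total l₁ l₂ with hle | hle
      · have := aux_D h₁ hle
        rw [abs_sub_comm, abs_of_nonneg (by linarith : (0:ℝ) ≤ l₂ - l₁),
          min_eq_left hle]
        exact this
      · have := aux_D h₂ hle
        rw [abs_of_nonneg (by linarith : (0:ℝ) ≤ l₁ - l₂), min_eq_right hle]
        calc ∫ t in Set.Ici (0:ℝ),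
              |l₁ * Real.exp (-(l₁ * t)) - l₂ * Real.exp (-(l₂ * t))|
            = ∫ t in Set.Ici (0:ℝ),
              |l₂ * Real.exp (-(l₂ * t)) - l₁ * Real.exp (-(l₁ * t))| := by
              congr 1; funext t; rw [abs_sub_comm]
          _ ≤ 2 * (l₁ - l₂) / l₂ := this
    rw [hsub]
    have hWsubInt : IntegrableOn
        (fun t : ℝ => |l₁ * Real.exp (-(l₁ * t)) - l₂ * Real.exp (-(l₂ * t))|)
        (Set.Ici 0) := ((aux_w_intOn h₁).sub (aux_w_intOn h₂)).abs
    calc |∫ t in Set.Ici (0:ℝ),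
          (l₁ * Real.exp (-(l₁ * t)) - l₂ * Real.exp (-(l₂ * t))) * J g (S (max t 0) x)|
        ≤ ∫ t in Set.Ici (0:ℝ),
          |(l₁ * Real.exp (-(l₁ * t)) - l₂ * Real.exp (-(l₂ * t))) * J g (S (max t 0) x)| := by
          have := norm_integral_le_integral_norm (μ := volume.restrict (Set.Ici 0))
            fun t => (l₁ * Real.exp (-(l₁ * t)) - l₂ * Real.exp (-(l₂ * t)))
              * J g (S (max t 0) x)
          simpa only [Real.norm_eq_abs] using this
      _ ≤ ∫ t in Set.Ici (0:ℝ),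
          |l₁ * Real.exp (-(l₁ * t)) - l₂ * Real.exp (-(l₂ * t))| := by
          apply integral_mono_of_nonneg
            (Filter.Eventually.of_forall fun t => abs_nonneg _) hWsubInt
          filter_upwards with t
          rw [abs_mul]
          calc |l₁ * Real.exp (-(l₁ * t)) - l₂ * Real.exp (-(l₂ * t))|
                * |J g (S (max t 0) x)|
              ≤ |l₁ * Real.exp (-(l₁ * t)) - l₂ * Real.exp (-(l₂ * t))| * 1 :=
                mul_le_mul_of_nonneg_left (hJbound g hg hgb _) (abs_nonneg _)
            _ = _ := mul_one _
      _ ≤ 2 * |l₁ - l₂| / min l₁ l₂ := habs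
  have hGood : ∀ l : ℝ, 0 < l → ∀ (k : ℕ) (f : X → ℝ), Measurable f →
      (∀ z, |f z| ≤ 1) →
      Measurable ((T l)^[k] f) ∧ (∀ z, |(T l)^[k] f z| ≤ 1) := by
    intro l hl k
    induction k with
    | zero =>
      intro f hf hfb
      simp only [Function.iterate_zero_apply]
      exact ⟨hf, hfb⟩
    | succ k ih =>
      intro f hf hfb
      obtain ⟨h1, h2⟩ := ih f hf hfb
      rw [Function.iterate_succ_apply']
      exact ⟨hTmeas l _ h1, hTbound l hl _ h1 h2⟩
  have hkey : ∀ l : ℝ, 0 < l → ∀ (k : ℕ) (f : X → ℝ), Measurable f →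
      (∀ z, |f z| ≤ 1) → ∀ x : X,
      |(T l)^[k] f x - (T lbar)^[k] f x| ≤ k * (2 * |l - lbar| / min l lbar) := by
    intro l hl k
    induction k with
    | zero => intro f hf hfb x; simp
    | succ k ih =>
      intro f hf hfb x
      have hminpos : 0 < min l lbar := lt_min hl hlbar0
      have hc0 : 0 ≤ 2 * |l - lbar| / min l lbar := by positivity
      rw [Function.iterate_succ_apply', Function.iterate_succ_apply']
      obtain ⟨hA, hAb⟩ := hGood l hl k f hf hfb
      obtain ⟨hB, hBb⟩ := hGood lbar hlbar0 k f hf hfb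
      have h1 : |T l ((T l)^[k] f) x - T l ((T lbar)^[k] f) x|
          ≤ k * (2 * |l - lbar| / min l lbar) :=
        hTdiff l hl _ _ hA hAb hB hBb _ (fun z => ih f hf hfb z) x
      have h2 : |T l ((T lbar)^[k] f) x - T lbar ((T lbar)^[k] f) x|
          ≤ 2 * |l - lbar| / min l lbar :=
        hTlamdiff l lbar hl hlbar0 _ hB hBb x
      calc |T l ((T l)^[k] f) x - T lbar ((T lbar)^[k] f) x|
          ≤ |T l ((T l)^[k] f) x - T l ((T lbar)^[k] f) x|
            + |T l ((T lbar)^[k] f) x - T lbar ((T lbar)^[k] f) x| :=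
            abs_sub_le _ _ _
        _ ≤ k * (2 * |l - lbar| / min l lbar) + 2 * |l - lbar| / min l lbar := by
            linarith
        _ = (k + 1 : ℕ) * (2 * |l - lbar| / min l lbar) := by push_cast; ring
  -- the operators in the statement agree with T
  have hTT : ∀ l : ℝ, (fun g : X → ℝ => fun x =>
      ∫ t in Set.Ici (0 : ℝ), l * Real.exp (-(l * t)) *
        ∫ θ, p (S t x) θ * g (w θ (S t x)) ∂ϑ) = T l := by
    intro l
    funext g x
    rw [hT]
    apply setIntegral_congr_fun measurableSet_Ici
    intro t ht
    have hmax : max t 0 = t := max_eq_left ht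
    dsimp only
    rw [hmax]
  -- total mass
  set Ctot : ℝ := (μ.toJordanDecomposition.posPart Set.univ).toReal
      + (μ.toJordanDecomposition.negPart Set.univ).toReal with hCtot
  have hCtot0 : 0 ≤ Ctot := by
    rw [hCtot]; positivity
  -- bound for sInt difference
  have hsIntBound : ∀ (A B : X → ℝ), Measurable A → (∀ z, |A z| ≤ 1) →
      Measurable B → (∀ z, |B z| ≤ 1) → ∀ D : ℝ, (∀ z, |A z - B z| ≤ D) →
      |sInt μ A - sInt μ B| ≤ D * Ctot := by
    intro A B hA hAb hB hBb D hD
    have hIntP : ∀ (ν : Measure X), IsFiniteMeasure ν → ∀ (g : X → ℝ),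
        Measurable g → (∀ z, |g z| ≤ 1) → Integrable g ν := by
      intro ν hν g hg hgb
      exact (integrable_const (1:ℝ)).mono' hg.aestronglyMeasurable
        (Filter.Eventually.of_forall fun z => by
          simpa [Real.norm_eq_abs] using hgb z)
    have hP : IsFiniteMeasure μ.toJordanDecomposition.posPart := inferInstance
    have hN : IsFiniteMeasure μ.toJordanDecomposition.negPart := inferInstance
    have hAP := hIntP _ hP A hA hAb
    have hBP := hIntP _ hP B hB hBb
    have hAN := hIntP _ hN A hA hAb
    have hBN := hIntP _ hN B hB hBb
    have hsplit : sInt μ A - sInt μ B =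
        (∫ z, (A z - B z) ∂μ.toJordanDecomposition.posPart)
          - ∫ z, (A z - B z) ∂μ.toJordanDecomposition.negPart := by
      rw [sInt, sInt, integral_sub hAP hBP, integral_sub hAN hBN]
      ring
    rw [hsplit]
    have hb1 : |∫ z, (A z - B z) ∂μ.toJordanDecomposition.posPart|
        ≤ D * (μ.toJordanDecomposition.posPart Set.univ).toReal := by
      have := norm_integral_le_of_norm_le_const
        (μ := μ.toJordanDecomposition.posPart) (C := D)
        (f := fun z => A z - B z)
        (Filter.Eventually.of_forall fun z => by
          simpa [Real.norm_eq_abs] using hD z)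
      simpa [Real.norm_eq_abs, Measure.real] using this
    have hb2 : |∫ z, (A z - B z) ∂μ.toJordanDecomposition.negPart|
        ≤ D * (μ.toJordanDecomposition.negPart Set.univ).toReal := by
      have := norm_integral_le_of_norm_le_const
        (μ := μ.toJordanDecomposition.negPart) (C := D)
        (f := fun z => A z - B z)
        (Filter.Eventually.of_forall fun z => by
          simpa [Real.norm_eq_abs] using hD z)
      simpa [Real.norm_eq_abs, Measure.real] using this
    calc |(∫ z, (A z - B z) ∂μ.toJordanDecomposition.posPart)
          - ∫ z, (A z - B z) ∂μ.toJordanDecomposition.negPart|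
        ≤ |∫ z, (A z - B z) ∂μ.toJordanDecomposition.posPart|
          + |∫ z, (A z - B z) ∂μ.toJordanDecomposition.negPart| := abs_sub _ _
      _ ≤ D * (μ.toJordanDecomposition.posPart Set.univ).toReal
          + D * (μ.toJordanDecomposition.negPart Set.univ).toReal := by linarith
      _ = D * Ctot := by rw [hCtot]; ring
  have hzero : ∀ l : ℝ, T l (fun _ => (0:ℝ)) = fun _ => (0:ℝ) := by
    intro l
    funext x
    simp only [hT, hJ, mul_zero, integral_zero]
  have hzs : sInt μ (fun _ : X => (0:ℝ)) = 0 := by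
    rw [sInt]; simp
  have hmem : ∀ l : ℝ, (0:ℝ) ∈ {r : ℝ | ∃ f : X → ℝ, (∀ z, |f z| ≤ 1) ∧
      LipschitzWith 1 f ∧
      r = |sInt μ ((fun g : X → ℝ => fun x =>
              ∫ t in Set.Ici (0 : ℝ), l * Real.exp (-(l * t)) *
                ∫ θ, p (S t x) θ * g (w θ (S t x)) ∂ϑ)^[n] f) -
           sInt μ ((fun g : X → ℝ => fun x =>
              ∫ t in Set.Ici (0 : ℝ), lbar * Real.exp (-(lbar * t)) *
                ∫ θ, p (S t x) θ * g (w θ (S t x)) ∂ϑ)^[n] f)|} := by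
    intro l
    refine ⟨fun _ => 0, fun z => by simp, (LipschitzWith.const (0:ℝ)).weaken zero_le_one, ?_⟩
    rw [hTT l, hTT lbar, Function.iterate_fixed (hzero l), Function.iterate_fixed (hzero lbar),
      hzs]
    simp
  have hub : ∀ l : ℝ, 0 < l → ∀ r ∈ {r : ℝ | ∃ f : X → ℝ, (∀ z, |f z| ≤ 1) ∧
      LipschitzWith 1 f ∧
      r = |sInt μ ((fun g : X → ℝ => fun x =>
              ∫ t in Set.Ici (0 : ℝ), l * Real.exp (-(l * t)) *
                ∫ θ, p (S t x) θ * g (w θ (S t x)) ∂ϑ)^[n] f) -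
           sInt μ ((fun g : X → ℝ => fun x =>
              ∫ t in Set.Ici (0 : ℝ), lbar * Real.exp (-(lbar * t)) *
                ∫ θ, p (S t x) θ * g (w θ (S t x)) ∂ϑ)^[n] f)|},
      r ≤ Ctot * (n * (2 * |l - lbar| / min l lbar)) := by
    intro l hl0 r hr
    obtain ⟨f, hfb, hflip, rfl⟩ := hr
    rw [hTT l, hTT lbar]
    have hmf : Measurable f := hflip.continuous.measurable
    obtain ⟨hA, hAb⟩ := hGood l hl0 n f hmf hfb
    obtain ⟨hB, hBb⟩ := hGood lbar hlbar0 n f hmf hfb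
    have hbd := hsIntBound _ _ hA hAb hB hBb (n * (2 * |l - lbar| / min l lbar))
      (hkey l hl0 n f hmf hfb)
    calc |sInt μ ((T l)^[n] f) - sInt μ ((T lbar)^[n] f)|
        ≤ (n * (2 * |l - lbar| / min l lbar)) * Ctot := hbd
      _ = Ctot * (n * (2 * |l - lbar| / min l lbar)) := by ring
  apply tendsto_of_tendsto_of_tendsto_of_le_of_le' (g := fun _ : ℝ => (0:ℝ))
    (h := fun l : ℝ => Ctot * (n * (2 * |l - lbar| / min l lbar)))
  · exact tendsto_const_nhds
  · have hc1 : Continuous fun l : ℝ => |l - lbar| := by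
      have h0 : Continuous fun l : ℝ => l - lbar := continuous_sub_right lbar
      exact h0.abs
    have h1 : Tendsto (fun l : ℝ => |l - lbar|) (nhds lbar) (nhds 0) := by
      have := hc1.tendsto lbar
      simpa using this
    have hc2 : Continuous fun l : ℝ => min l lbar := by
      exact continuous_id.min continuous_const
    have h2 : Tendsto (fun l : ℝ => min l lbar) (nhds lbar) (nhds lbar) := by
      have := hc2.tendsto lbar
      simpa using this
    have h3 : Tendsto (fun l : ℝ => 2 * |l - lbar| / min l lbar) (nhds lbar) (nhds 0) := by
      have := (h1.const_mul 2).div h2 hlbar0.ne'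
      simpa [Pi.div_def] using this
    have h4 : Tendsto (fun l : ℝ => Ctot * ((n:ℝ) * (2 * |l - lbar| / min l lbar)))
        (nhds lbar) (nhds 0) := by
      have := (h3.const_mul (n:ℝ)).const_mul Ctot
      simpa using this
    exact h4.mono_left nhdsWithin_le_nhds
  · filter_upwards [self_mem_nhdsWithin] with l hl
    have hl0 : 0 < l := lt_of_le_of_lt (le_max_left 0 α) hl
    have hbdd : BddAbove {r : ℝ | ∃ f : X → ℝ, (∀ z, |f z| ≤ 1) ∧
        LipschitzWith 1 f ∧
        r = |sInt μ ((fun g : X → ℝ => fun x =>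
                ∫ t in Set.Ici (0 : ℝ), l * Real.exp (-(l * t)) *
                  ∫ θ, p (S t x) θ * g (w θ (S t x)) ∂ϑ)^[n] f) -
             sInt μ ((fun g : X → ℝ => fun x =>
                ∫ t in Set.Ici (0 : ℝ), lbar * Real.exp (-(lbar * t)) *
                  ∫ θ, p (S t x) θ * g (w θ (S t x)) ∂ϑ)^[n] f)|} :=
      ⟨Ctot * (n * (2 * |l - lbar| / min l lbar)), fun r hr => hub l hl0 r hr⟩
    exact le_csSup hbdd (hmem l)
  · filter_upwards [self_mem_nhdsWithin] with l hl
    have hl0 : 0 < l := lt_of_le_of_lt (le_max_left 0 α) hl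
    exact csSup_le ⟨0, hmem l⟩ (hub l hl0)
end

section
/- For every t ≥ 0 and every bounded continuous function f : X → ℝ, the function Π_(t)f : X → ℝ, x ↦ ∫_Θ p(S(t,x),θ) f(w_θ(S(t,x))) dθ, is bounded and continuous (i.e., the Markov operator associated with the kernel Π_(t) has the Feller property). -/
open MeasureTheory Real Filter Topology

/-- For every `t ≥ 0` and every bounded continuous `f : X → ℝ`,
the function `Π_(t)f : x ↦ ∫_Θ p(S(t,x),θ) f(w_θ(S(t,x))) dθ` is bounded and continuous
(the Markov operator associated with the kernel `Π_(t)` has the Feller property). -/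
theorem stmt_11
    {H : Type*} [NormedAddCommGroup H] [NormedSpace ℝ H] [CompleteSpace H]
    [SecondCountableTopology H] [MeasurableSpace H] [BorelSpace H]
    {Θ : Type*} [TopologicalSpace Θ] [MeasurableSpace Θ] [BorelSpace Θ]
    (ϑ : Measure Θ) [SigmaFinite ϑ]
    (X : Set H) (hXc : IsClosed X) (hXne : X.Nonempty)
    (S : ℝ → X → X)
    (hS0 : ∀ x, S 0 x = x)
    (hSadd : ∀ s t : ℝ, 0 ≤ s → 0 ≤ t → ∀ x, S (s + t) x = S s (S t x))
    (hScont : ContinuousOn (fun q : ℝ × X => S q.1 q.2) (Set.Ici 0 ×ˢ Set.univ))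
    (w : Θ → X → X) (hw : Continuous fun q : X × Θ => w q.2 q.1)
    (p : X → Θ → ℝ) (hpcont : Continuous fun q : X × Θ => p q.1 q.2)
    (hp0 : ∀ x θ, 0 ≤ p x θ) (hp1 : ∀ x, ∫ θ, p x θ ∂ϑ = 1)
    (Lp : ℝ) (hLp : 0 < Lp)
    (hA4 : ∀ x y : X, ∫ θ, |p x θ - p y θ| ∂ϑ ≤ Lp * ‖(x : H) - y‖)
    (t : ℝ) (ht : 0 ≤ t)
    (f : X → ℝ) (hfc : Continuous f) (hfb : ∃ C : ℝ, ∀ z, |f z| ≤ C) :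
    (∃ C : ℝ, ∀ x : X, |∫ θ, p (S t x) θ * f (w θ (S t x)) ∂ϑ| ≤ C) ∧
    Continuous (fun x : X => ∫ θ, p (S t x) θ * f (w θ (S t x)) ∂ϑ) := by
  obtain ⟨C, hC⟩ := hfb
  obtain ⟨x0, hx0⟩ := hXne
  have hC0 : 0 ≤ C := (abs_nonneg _).trans (hC ⟨x0, hx0⟩)
  -- basic continuity facts
  have hpm : ∀ x : X, Continuous fun θ => p x θ := fun x =>
    hpcont.comp (continuous_const.prodMk continuous_id)
  have hwm : ∀ x : X, Continuous fun θ => f (w θ x) := fun x =>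
    hfc.comp (hw.comp (continuous_const.prodMk continuous_id))
  -- integrability of p x
  have hpint : ∀ x : X, Integrable (fun θ => p x θ) ϑ := by
    intro x
    by_contra h
    have h1 := hp1 x
    rw [integral_undef h] at h1
    exact one_ne_zero h1.symm
  -- integrability of products
  have hint2 : ∀ x z : X, Integrable (fun θ => p x θ * f (w θ z)) ϑ := by
    intro x z
    refine Integrable.mono' ((hpint x).const_mul C)
      ((hpm x).mul (hwm z)).aestronglyMeasurable ?_
    filter_upwards with θ
    rw [Real.norm_eq_abs, abs_mul, abs_of_nonneg (hp0 x θ), mul_comm C]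
    exact mul_le_mul_of_nonneg_left (hC _) (hp0 x θ)
  -- pointwise bound on the integral
  have hbdd : ∀ x z : X, |∫ θ, p x θ * f (w θ z) ∂ϑ| ≤ C := by
    intro x z
    have h1 : |∫ θ, p x θ * f (w θ z) ∂ϑ| ≤ ∫ θ, |p x θ * f (w θ z)| ∂ϑ := by
      have := norm_integral_le_integral_norm (μ := ϑ) (fun θ => p x θ * f (w θ z))
      simp only [Real.norm_eq_abs] at this
      exact this
    have h2 : ∫ θ, |p x θ * f (w θ z)| ∂ϑ ≤ ∫ θ, C * p x θ ∂ϑ := by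
      refine integral_mono (hint2 x z).abs ((hpint x).const_mul C) ?_
      intro θ
      show |p x θ * f (w θ z)| ≤ C * p x θ
      rw [abs_mul, abs_of_nonneg (hp0 x θ), mul_comm]
      exact mul_le_mul_of_nonneg_right (hC _) (hp0 x θ)
    have h3 : ∫ θ, C * p x θ ∂ϑ = C := by
      rw [integral_const_mul, hp1 x, mul_one]
    linarith
  -- continuity of x ↦ S t x
  have hSt : Continuous fun x : X => S t x := by
    have := hScont.comp_continuous (f := fun x : X => ((t : ℝ), x))
      (continuous_const.prodMk continuous_id) (fun x => ⟨ht, Set.mem_univ x⟩)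
    exact this
  -- continuity of the integral map
  have hg : Continuous fun x : X => ∫ θ, p x θ * f (w θ x) ∂ϑ := by
    rw [continuous_iff_seqContinuous]
    intro u y hu
    -- decompose
    have key : ∀ n, (∫ θ, p (u n) θ * f (w θ (u n)) ∂ϑ) =
        ((∫ θ, p (u n) θ * f (w θ (u n)) ∂ϑ) - ∫ θ, p y θ * f (w θ (u n)) ∂ϑ) +
        ∫ θ, p y θ * f (w θ (u n)) ∂ϑ := fun n => by ring
    -- limit of the norms
    have hnorm : Tendsto (fun n => ‖((u n : H)) - (y : H)‖) atTop (𝓝 0) := by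
      have huH : Tendsto (fun n => (u n : H)) atTop (𝓝 (y : H)) :=
        (continuous_subtype_val.tendsto y).comp hu
      have : Tendsto (fun n => (u n : H) - (y : H)) atTop (𝓝 ((y : H) - (y : H))) :=
        huH.sub tendsto_const_nhds
      rw [sub_self] at this
      simpa using this.norm
    -- first term tends to 0
    have hA : Tendsto (fun n => (∫ θ, p (u n) θ * f (w θ (u n)) ∂ϑ) -
        ∫ θ, p y θ * f (w θ (u n)) ∂ϑ) atTop (𝓝 0) := by
      refine squeeze_zero_norm (a := fun n => C * (Lp * ‖((u n : H)) - (y : H)‖))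
        (fun n => ?_) ?_
      · 
        rw [Real.norm_eq_abs, ← integral_sub (hint2 (u n) (u n)) (hint2 y (u n))]
        have h1 : |∫ θ, (p (u n) θ * f (w θ (u n)) - p y θ * f (w θ (u n))) ∂ϑ| ≤
            ∫ θ, |p (u n) θ * f (w θ (u n)) - p y θ * f (w θ (u n))| ∂ϑ :=
          by
            have := norm_integral_le_integral_norm (μ := ϑ)
              (fun θ => p (u n) θ * f (w θ (u n)) - p y θ * f (w θ (u n)))
            simp only [Real.norm_eq_abs] at this
            exact this
        have h2 : ∫ θ, |p (u n) θ * f (w θ (u n)) - p y θ * f (w θ (u n))| ∂ϑ ≤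
            ∫ θ, C * |p (u n) θ - p y θ| ∂ϑ := by
          refine integral_mono ((hint2 (u n) (u n)).sub (hint2 y (u n))).abs
            (((hpint (u n)).sub (hpint y)).abs.const_mul C) ?_
          intro θ
          show |p (u n) θ * f (w θ (u n)) - p y θ * f (w θ (u n))| ≤ C * |p (u n) θ - p y θ|
          rw [← sub_mul, abs_mul, mul_comm]
          exact mul_le_mul_of_nonneg_right (hC _) (abs_nonneg _)
        have h3 : ∫ θ, C * |p (u n) θ - p y θ| ∂ϑ ≤ C * (Lp * ‖((u n : H)) - (y : H)‖) := by
          rw [integral_const_mul]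
          exact mul_le_mul_of_nonneg_left (hA4 (u n) y) hC0
        exact h1.trans (h2.trans h3)
      · have := hnorm.const_mul (C * Lp)
        simpa [mul_assoc] using this
    -- second term tends to the limit by dominated convergence
    have hB : Tendsto (fun n => ∫ θ, p y θ * f (w θ (u n)) ∂ϑ) atTop
        (𝓝 (∫ θ, p y θ * f (w θ y) ∂ϑ)) := by
      apply tendsto_integral_of_dominated_convergence (bound := fun θ => C * p y θ)
      · exact fun n => ((hpm y).mul (hwm (u n))).aestronglyMeasurable
      · exact (hpint y).const_mul C
      · intro n
        filter_upwards with θ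
        rw [Real.norm_eq_abs, abs_mul, abs_of_nonneg (hp0 y θ), mul_comm (p y θ)]
        exact mul_le_mul_of_nonneg_right (hC _) (hp0 y θ)
      · filter_upwards with θ
        have hcz : Continuous fun z : X => f (w θ z) :=
          hfc.comp (hw.comp (continuous_id.prodMk continuous_const))
        exact ((hcz.tendsto y).comp hu).const_mul (p y θ)
    have := hA.add hB
    rw [zero_add] at this
    refine this.congr fun n => (key n).symm
  refine ⟨⟨C, fun x => hbdd _ _⟩, hg.comp hSt⟩
end

section
/- For every λ > 0 and every bounded continuous function f : X → ℝ, the function P_λ f : X → ℝ, x ↦ ∫₀^∞ λ e^{−λ t} ∫_Θ p(S(t,x),θ) f(w_θ(S(t,x))) dθ dt, is bounded and continuous (i.e., the Markov operator P_λ is Feller). -/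
open MeasureTheory Real

/-- For every `λ > 0` and every bounded continuous `f : X → ℝ`, the
function `P_λ f : x ↦ ∫₀^∞ λ e^{−λt} ∫_Θ p(S(t,x),θ) f(w_θ(S(t,x))) dθ dt` is bounded and
continuous (the Markov operator `P_λ` is Feller). -/
theorem stmt_12
    {H : Type*} [NormedAddCommGroup H] [NormedSpace ℝ H] [CompleteSpace H]
    [SecondCountableTopology H] [MeasurableSpace H] [BorelSpace H]
    {Θ : Type*} [TopologicalSpace Θ] [MeasurableSpace Θ] [BorelSpace Θ]
    (ϑ : Measure Θ) [SigmaFinite ϑ]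
    (X : Set H) (hXc : IsClosed X) (hXne : X.Nonempty)
    (S : ℝ → X → X)
    (hS0 : ∀ x, S 0 x = x)
    (hSadd : ∀ s t : ℝ, 0 ≤ s → 0 ≤ t → ∀ x, S (s + t) x = S s (S t x))
    (hScont : ContinuousOn (fun q : ℝ × X => S q.1 q.2) (Set.Ici 0 ×ˢ Set.univ))
    (w : Θ → X → X) (hw : Continuous fun q : X × Θ => w q.2 q.1)
    (p : X → Θ → ℝ) (hpcont : Continuous fun q : X × Θ => p q.1 q.2)
    (hp0 : ∀ x θ, 0 ≤ p x θ) (hp1 : ∀ x, ∫ θ, p x θ ∂ϑ = 1)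
    (Lp : ℝ) (hLp : 0 < Lp)
    (hA4 : ∀ x y : X, ∫ θ, |p x θ - p y θ| ∂ϑ ≤ Lp * ‖(x : H) - y‖)
    (lam : ℝ) (hlam : 0 < lam)
    (f : X → ℝ) (hfc : Continuous f) (hfb : ∃ C : ℝ, ∀ z, |f z| ≤ C) :
    (∃ C : ℝ, ∀ x : X,
      |∫ t in Set.Ici (0 : ℝ), lam * Real.exp (-(lam * t)) *
          ∫ θ, p (S t x) θ * f (w θ (S t x)) ∂ϑ| ≤ C) ∧
    Continuous (fun x : X => ∫ t in Set.Ici (0 : ℝ), lam * Real.exp (-(lam * t)) *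
        ∫ θ, p (S t x) θ * f (w θ (S t x)) ∂ϑ) := by
  obtain ⟨C, hC⟩ := hfb
  have hC0 : 0 ≤ C := le_trans (abs_nonneg _) (hC ⟨hXne.choose, hXne.choose_spec⟩)
  set g : X → ℝ := fun x => ∫ θ, p x θ * f (w θ x) ∂ϑ with hg
  -- basic continuity facts
  have hpcx : ∀ x : X, Continuous fun θ => p x θ := fun x =>
    hpcont.comp (Continuous.prodMk_right x)
  have hfwx : ∀ x : X, Continuous fun θ => f (w θ x) := fun x =>
    hfc.comp (hw.comp (Continuous.prodMk_right x))
  -- integrability of p x ·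
  have hpint : ∀ x : X, Integrable (fun θ => p x θ) ϑ := by
    intro x
    by_contra h
    have h1 := hp1 x
    rw [integral_undef h] at h1
    exact one_ne_zero h1.symm
  -- integrability of the inner integrand
  have hgint : ∀ x y : X, Integrable (fun θ => p x θ * f (w θ y)) ϑ := by
    intro x y
    refine ((hpint x).const_mul C).mono'
      ((hpcx x).mul (hfwx y)).aestronglyMeasurable (Filter.Eventually.of_forall fun θ => ?_)
    rw [Real.norm_eq_abs, abs_mul, abs_of_nonneg (hp0 x θ), mul_comm]
    exact mul_le_mul_of_nonneg_right (hC _) (hp0 x θ)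
  -- bound on g
  have hgbound : ∀ x : X, |g x| ≤ C := by
    intro x
    have := norm_integral_le_of_norm_le (f := fun θ => p x θ * f (w θ x))
      (g := fun θ => C * p x θ) ((hpint x).const_mul C)
      (Filter.Eventually.of_forall fun θ => by
        rw [Real.norm_eq_abs, abs_mul, abs_of_nonneg (hp0 x θ), mul_comm]
        exact mul_le_mul_of_nonneg_right (hC _) (hp0 x θ))
    rw [integral_const_mul, hp1 x, mul_one] at this
    simpa using this
  -- continuity of g
  have hgcont : Continuous g := by
    rw [continuous_iff_continuousAt]
    intro x₀
    have h1 : Filter.Tendsto (fun x => ∫ θ, p x₀ θ * f (w θ x) ∂ϑ) (nhds x₀) (nhds (g x₀)) := by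
      refine tendsto_integral_filter_of_dominated_convergence (fun θ => C * p x₀ θ)
        (Filter.Eventually.of_forall fun x =>
          ((hpcx x₀).mul (hfwx x)).aestronglyMeasurable)
        (Filter.Eventually.of_forall fun x => Filter.Eventually.of_forall fun θ => by
          rw [Real.norm_eq_abs, abs_mul, abs_of_nonneg (hp0 x₀ θ), mul_comm]
          exact mul_le_mul_of_nonneg_right (hC _) (hp0 x₀ θ))
        ((hpint x₀).const_mul C)
        (Filter.Eventually.of_forall fun θ => ?_)
      exact Filter.Tendsto.const_mul _
        ((hfc.comp (hw.comp (continuous_id.prodMk continuous_const))).tendsto x₀)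
    have h2 : Filter.Tendsto (fun x => g x - ∫ θ, p x₀ θ * f (w θ x) ∂ϑ)
        (nhds x₀) (nhds 0) := by
      have hbd : ∀ x : X, ‖g x - ∫ θ, p x₀ θ * f (w θ x) ∂ϑ‖ ≤ C * Lp * ‖(x : H) - x₀‖ := by
        intro x
        rw [hg]
        rw [← integral_sub (hgint x x) (hgint x₀ x)]
        have hb := norm_integral_le_of_norm_le
          (f := fun θ => p x θ * f (w θ x) - p x₀ θ * f (w θ x))
          (g := fun θ => C * |p x θ - p x₀ θ|)
          ((((hpint x).sub (hpint x₀)).abs).const_mul C)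
          (Filter.Eventually.of_forall fun θ => by
            show ‖p x θ * f (w θ x) - p x₀ θ * f (w θ x)‖ ≤ C * |p x θ - p x₀ θ|
            rw [← sub_mul, Real.norm_eq_abs, abs_mul, mul_comm]
            exact mul_le_mul_of_nonneg_right (hC _) (abs_nonneg _))
        refine hb.trans ?_
        rw [integral_const_mul, mul_assoc]
        exact mul_le_mul_of_nonneg_left (hA4 x x₀) hC0
      have hten : Filter.Tendsto (fun x : X => C * Lp * ‖(x : H) - x₀‖) (nhds x₀) (nhds 0) := by
        have : Continuous fun x : X => C * Lp * ‖(x : H) - x₀‖ :=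
          continuous_const.mul ((continuous_subtype_val.sub continuous_const).norm)
        simpa using this.tendsto x₀
      exact squeeze_zero_norm hbd hten
    have := h1.add h2
    simp only [add_sub_cancel] at this
    simpa [ContinuousAt] using this
  -- continuity of t ↦ S t x on Ici 0
  have hSx : ∀ x : X, ContinuousOn (fun t => S t x) (Set.Ici (0 : ℝ)) := by
    intro x
    have : ContinuousOn (fun t : ℝ => (t, x)) (Set.Ici (0 : ℝ)) :=
      (continuous_id.prodMk continuous_const).continuousOn
    exact hScont.comp this fun t ht => ⟨ht, trivial⟩
  -- continuity of x ↦ S t x for t ≥ 0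
  have hSt : ∀ t : ℝ, 0 ≤ t → Continuous fun x => S t x := by
    intro t ht
    exact hScont.comp_continuous (continuous_const.prodMk continuous_id)
      fun x => ⟨ht, trivial⟩
  -- the exponential weight is integrable
  have hexpint : IntegrableOn (fun t : ℝ => lam * Real.exp (-(lam * t)) * C)
      (Set.Ici (0 : ℝ)) := by
    rw [integrableOn_Ici_iff_integrableOn_Ioi]
    have := (exp_neg_integrableOn_Ioi 0 hlam)
    simp only [neg_mul] at this ⊢
    exact (this.const_mul lam).mul_const C
  have hwnn : ∀ t : ℝ, 0 ≤ lam * Real.exp (-(lam * t)) :=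
    fun t => mul_nonneg hlam.le (Real.exp_pos _).le
  -- a.e. measurability of the main integrand
  have hmeas : ∀ x : X, AEStronglyMeasurable
      (fun t : ℝ => lam * Real.exp (-(lam * t)) * g (S t x))
      (volume.restrict (Set.Ici (0 : ℝ))) := by
    intro x
    refine ContinuousOn.aestronglyMeasurable ?_ measurableSet_Ici
    exact (Continuous.continuousOn (by continuity)).mul (hgcont.comp_continuousOn (hSx x))
  -- the a.e. bound
  have hbound : ∀ x : X, ∀ᵐ t ∂(volume.restrict (Set.Ici (0 : ℝ))),
      ‖lam * Real.exp (-(lam * t)) * g (S t x)‖ ≤ lam * Real.exp (-(lam * t)) * C := by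
    intro x
    refine Filter.Eventually.of_forall fun t => ?_
    rw [Real.norm_eq_abs, abs_mul, abs_of_nonneg (hwnn t)]
    exact mul_le_mul_of_nonneg_left (hgbound _) (hwnn t)
  constructor
  · refine ⟨∫ t in Set.Ici (0 : ℝ), lam * Real.exp (-(lam * t)) * C, fun x => ?_⟩
    have := norm_integral_le_of_norm_le hexpint (hbound x)
    simpa using this
  · rw [continuous_iff_continuousAt]
    intro x₀
    refine tendsto_integral_filter_of_dominated_convergence
      (fun t => lam * Real.exp (-(lam * t)) * C)
      (Filter.Eventually.of_forall fun x => hmeas x)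
      (Filter.Eventually.of_forall fun x => hbound x)
      hexpint ?_
    refine (ae_restrict_mem measurableSet_Ici).mono fun t ht => ?_
    exact Filter.Tendsto.const_mul _ ((hgcont.comp (hSt t ht)).tendsto x₀)
end

section
/- Under (A2), for all λ₁, λ₂ > ᾱ and all Borel probability measures μ₁, μ₂ on X: ‖μ₁G_{λ₁} − μ₂G_{λ₂}‖_FM ≤ |λ₁ − λ₂| (1/λ₁ + 1/λ₂) + (1 + L λ₂/(λ₂ − α)) ‖μ₁ − μ₂‖_FM, where μG_λ(A) := ∫_X ∫₀^∞ λ e^{−λ t} 𝟙_A(S(t,x)) dt μ(dx). -/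
open MeasureTheory Real Set

lemma exp_int' {b : ℝ} (hb : 0 < b) :
    IntegrableOn (fun t : ℝ => Real.exp (-(b * t))) (Ici (0:ℝ)) := by
  rw [integrableOn_Ici_iff_integrableOn_Ioi]
  simpa [neg_mul] using exp_neg_integrableOn_Ioi 0 hb

lemma exp_val' {b : ℝ} (hb : 0 < b) :
    ∫ t in Ici (0:ℝ), Real.exp (-(b * t)) = 1 / b := by
  rw [integral_Ici_eq_integral_Ioi]
  have := integral_comp_mul_left_Ioi (fun y : ℝ => Real.exp (-y)) 0 hb
  simp only [mul_zero] at this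
  rw [this, integral_exp_neg_Ioi_zero]
  simp [one_div]

lemma wexp_int {b : ℝ} (hb : 0 < b) :
    IntegrableOn (fun t : ℝ => b * Real.exp (-(b * t))) (Ici (0:ℝ)) :=
  (exp_int' hb).const_mul b

lemma abs_integral_le' {β : Type*} [MeasurableSpace β] (μ : Measure β) (f : β → ℝ) :
    |∫ a, f a ∂μ| ≤ ∫ a, |f a| ∂μ := by
  simpa [Real.norm_eq_abs] using MeasureTheory.norm_integral_le_integral_norm (μ := μ) f

lemma aux_absdiff {a b : ℝ} (ha : 0 < a) (hab : a ≤ b) :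
    ∫ t in Ici (0:ℝ), |a * Real.exp (-(a*t)) - b * Real.exp (-(b*t))|
      ≤ (b - a) * (1/a + 1/b) := by
  have hb : 0 < b := lt_of_lt_of_le ha hab
  have hint : IntegrableOn (fun t : ℝ => |a * Real.exp (-(a*t)) - b * Real.exp (-(b*t))|)
      (Ici (0:ℝ)) := ((wexp_int ha).sub (wexp_int hb)).abs
  have hint2 : IntegrableOn
      (fun t : ℝ => (b - a) * Real.exp (-(b*t)) + a * (Real.exp (-(a*t)) - Real.exp (-(b*t))))
      (Ici (0:ℝ)) :=
    ((exp_int' hb).const_mul _).add (((exp_int' ha).sub (exp_int' hb)).const_mul a)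
  have hmono : ∫ t in Ici (0:ℝ), |a * Real.exp (-(a*t)) - b * Real.exp (-(b*t))|
      ≤ ∫ t in Ici (0:ℝ),
        ((b - a) * Real.exp (-(b*t)) + a * (Real.exp (-(a*t)) - Real.exp (-(b*t)))) := by
    refine setIntegral_mono_on hint hint2 measurableSet_Ici (fun t ht => ?_)
    have hexp : Real.exp (-(b*t)) ≤ Real.exp (-(a*t)) := by
      apply Real.exp_le_exp.mpr
      have : a * t ≤ b * t := mul_le_mul_of_nonneg_right hab ht
      linarith
    have heq : a * Real.exp (-(a*t)) - b * Real.exp (-(b*t))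
        = (a - b) * Real.exp (-(b*t)) + a * (Real.exp (-(a*t)) - Real.exp (-(b*t))) := by ring
    rw [heq]
    calc |(a - b) * Real.exp (-(b*t)) + a * (Real.exp (-(a*t)) - Real.exp (-(b*t)))|
        ≤ |(a - b) * Real.exp (-(b*t))| + |a * (Real.exp (-(a*t)) - Real.exp (-(b*t)))| :=
          abs_add_le _ _
      _ = (b - a) * Real.exp (-(b*t)) + a * (Real.exp (-(a*t)) - Real.exp (-(b*t))) := by
          rw [abs_mul, abs_mul, abs_of_nonneg (Real.exp_pos _).le,
            abs_of_nonneg (sub_nonneg.mpr hexp), abs_of_nonneg ha.le,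
            abs_of_nonpos (sub_nonpos.mpr hab), neg_sub]
  refine hmono.trans ?_
  have i1 : IntegrableOn (fun t : ℝ => (b - a) * Real.exp (-(b*t))) (Ici (0:ℝ)) :=
    (exp_int' hb).const_mul _
  have i2 : IntegrableOn (fun t : ℝ => a * (Real.exp (-(a*t)) - Real.exp (-(b*t))))
      (Ici (0:ℝ)) := ((exp_int' ha).sub (exp_int' hb)).const_mul a
  rw [integral_add i1 i2, integral_const_mul, integral_const_mul,
    integral_sub (exp_int' ha) (exp_int' hb), exp_val' ha, exp_val' hb]
  have : (b - a) * (1/b) + a * (1/a - 1/b) = 2 * (b-a) / b := by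
    field_simp; ring
  rw [this]
  have hba : 0 ≤ b - a := sub_nonneg.mpr hab
  rw [div_le_iff₀ hb]
  have h2 : (b - a) * (1/a + 1/b) * b = (b-a) * (b/a) + (b-a) := by field_simp
  rw [h2]
  have : (1:ℝ) ≤ b / a := (one_le_div ha).mpr hab
  nlinarith

lemma key_absdiff {a b : ℝ} (ha : 0 < a) (hb : 0 < b) :
    ∫ t in Ici (0:ℝ), |a * Real.exp (-(a*t)) - b * Real.exp (-(b*t))|
      ≤ |a - b| * (1/a + 1/b) := by
  rcases le_total a b with h | h
  · rw [abs_of_nonpos (sub_nonpos.mpr h), neg_sub]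
    exact aux_absdiff ha h
  · rw [abs_of_nonneg (sub_nonneg.mpr h)]
    have := aux_absdiff hb h
    simp_rw [abs_sub_comm] at this
    calc _ ≤ (a - b) * (1/b + 1/a) := this
      _ = (a - b) * (1/a + 1/b) := by ring

lemma g_props
    {H : Type*} [NormedAddCommGroup H] [NormedSpace ℝ H]
    (X : Set H) (S : ℝ → X → X)
    (hScont : ContinuousOn (fun q : ℝ × X => S q.1 q.2) (Set.Ici 0 ×ˢ Set.univ))
    (L α : ℝ)
    (hA2 : ∀ t : ℝ, 0 ≤ t → ∀ x y : X,
      ‖(S t x : H) - S t y‖ ≤ L * Real.exp (α * t) * ‖(x : H) - y‖)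
    (f : X → ℝ) (hfb : ∀ z, |f z| ≤ 1) (hfl : LipschitzWith 1 f)
    (lam : ℝ) (hlam : max 0 α < lam) :
    (∀ x, IntegrableOn (fun t => lam * Real.exp (-(lam*t)) * f (S t x)) (Ici (0:ℝ)))
    ∧ (∀ x, |∫ t in Ici (0:ℝ), lam * Real.exp (-(lam*t)) * f (S t x)| ≤ 1)
    ∧ (∀ x y, |(∫ t in Ici (0:ℝ), lam * Real.exp (-(lam*t)) * f (S t x))
          - ∫ t in Ici (0:ℝ), lam * Real.exp (-(lam*t)) * f (S t y)|
        ≤ (L * lam / (lam - α)) * ‖(x : H) - (y : H)‖) := by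
  have hlp : 0 < lam := lt_of_le_of_lt (le_max_left 0 α) hlam
  have hla : 0 < lam - α := sub_pos.mpr (lt_of_le_of_lt (le_max_right 0 α) hlam)
  have hφc : ∀ x : X, ContinuousOn (fun t : ℝ => f (S t x)) (Ici (0:ℝ)) := by
    intro x
    have h1 : ContinuousOn (fun t : ℝ => S t x) (Ici (0:ℝ)) :=
      hScont.comp
        ((continuous_id.prodMk (continuous_const : Continuous fun _ : ℝ => x)).continuousOn)
        (fun t ht => ⟨ht, Set.mem_univ x⟩)
    exact hfl.continuous.comp_continuousOn h1
  have hInt : ∀ x, IntegrableOn (fun t => lam * Real.exp (-(lam*t)) * f (S t x)) (Ici (0:ℝ)) := by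
    intro x
    have hc : ContinuousOn (fun t : ℝ => lam * Real.exp (-(lam*t)) * f (S t x)) (Ici (0:ℝ)) :=
      (Continuous.continuousOn (by continuity)).mul (hφc x)
    refine Integrable.mono' ((exp_int' hlp).const_mul lam)
      (hc.aestronglyMeasurable measurableSet_Ici) ?_
    filter_upwards [ae_restrict_mem measurableSet_Ici] with t _
    rw [norm_mul, norm_mul, Real.norm_eq_abs, Real.norm_eq_abs, Real.norm_eq_abs,
      abs_of_nonneg hlp.le, abs_of_nonneg (Real.exp_pos _).le]
    calc lam * Real.exp (-(lam*t)) * |f (S t x)| ≤ lam * Real.exp (-(lam*t)) * 1 := by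
          apply mul_le_mul_of_nonneg_left (hfb _) (by positivity)
      _ = lam * Real.exp (-(lam*t)) := mul_one _
  refine ⟨hInt, ?_, ?_⟩
  · intro x
    calc |∫ t in Ici (0:ℝ), lam * Real.exp (-(lam*t)) * f (S t x)|
        ≤ ∫ t in Ici (0:ℝ), |lam * Real.exp (-(lam*t)) * f (S t x)| :=
          abs_integral_le' _ _
      _ ≤ ∫ t in Ici (0:ℝ), lam * Real.exp (-(lam*t)) := by
          refine setIntegral_mono_on (hInt x).abs ((exp_int' hlp).const_mul lam)
            measurableSet_Ici (fun t _ => ?_)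
          rw [abs_mul, abs_mul, abs_of_nonneg hlp.le, abs_of_nonneg (Real.exp_pos _).le]
          calc lam * Real.exp (-(lam*t)) * |f (S t x)|
              ≤ lam * Real.exp (-(lam*t)) * 1 :=
                mul_le_mul_of_nonneg_left (hfb _) (by positivity)
            _ = lam * Real.exp (-(lam*t)) := mul_one _
      _ = 1 := by rw [integral_const_mul, exp_val' hlp, mul_one_div, div_self hlp.ne']
  · intro x y
    have hsub : (∫ t in Ici (0:ℝ), lam * Real.exp (-(lam*t)) * f (S t x))
          - ∫ t in Ici (0:ℝ), lam * Real.exp (-(lam*t)) * f (S t y)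
        = ∫ t in Ici (0:ℝ),
            (lam * Real.exp (-(lam*t)) * f (S t x) - lam * Real.exp (-(lam*t)) * f (S t y)) :=
      (integral_sub (hInt x) (hInt y)).symm
    rw [hsub]
    have hb : IntegrableOn
        (fun t : ℝ => (lam * L * ‖(x:H) - y‖) * Real.exp (-((lam - α)*t))) (Ici (0:ℝ)) :=
      (exp_int' hla).const_mul _
    calc |∫ t in Ici (0:ℝ),
            (lam * Real.exp (-(lam*t)) * f (S t x) - lam * Real.exp (-(lam*t)) * f (S t y))|
        ≤ ∫ t in Ici (0:ℝ),
            |lam * Real.exp (-(lam*t)) * f (S t x) - lam * Real.exp (-(lam*t)) * f (S t y)| :=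
          abs_integral_le' _ _
      _ ≤ ∫ t in Ici (0:ℝ), (lam * L * ‖(x:H) - y‖) * Real.exp (-((lam - α)*t)) := by
          refine setIntegral_mono_on ((hInt x).sub (hInt y)).abs hb
            measurableSet_Ici (fun t ht => ?_)
          have hlip : |f (S t x) - f (S t y)| ≤ ‖(S t x : H) - S t y‖ := by
            have := hfl.dist_le_mul (S t x) (S t y)
            rwa [Real.dist_eq, Subtype.dist_eq, dist_eq_norm, NNReal.coe_one, one_mul] at this
          have h2 : |f (S t x) - f (S t y)| ≤ L * Real.exp (α * t) * ‖(x:H) - y‖ :=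
            hlip.trans (hA2 t ht x y)
          have heq : lam * Real.exp (-(lam*t)) * f (S t x) - lam * Real.exp (-(lam*t)) * f (S t y)
              = lam * Real.exp (-(lam*t)) * (f (S t x) - f (S t y)) := by ring
          rw [heq, abs_mul, abs_mul, abs_of_nonneg hlp.le, abs_of_nonneg (Real.exp_pos _).le]
          calc lam * Real.exp (-(lam*t)) * |f (S t x) - f (S t y)|
              ≤ lam * Real.exp (-(lam*t)) * (L * Real.exp (α * t) * ‖(x:H) - y‖) :=
                mul_le_mul_of_nonneg_left h2 (by positivity)
            _ = (lam * L * ‖(x:H) - y‖) * Real.exp (-((lam - α)*t)) := by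
                rw [show -((lam - α)*t) = -(lam*t) + α*t by ring, Real.exp_add]; ring
      _ = (L * lam / (lam - α)) * ‖(x : H) - (y : H)‖ := by
          rw [integral_const_mul, exp_val' hla]; ring

/-- Under (A2), for all `λ₁, λ₂ > ᾱ` and Borel probability measures
`μ₁, μ₂` on `X`:
`‖μ₁G_{λ₁} − μ₂G_{λ₂}‖_FM ≤ |λ₁−λ₂|(1/λ₁+1/λ₂) + (1 + Lλ₂/(λ₂−α)) ‖μ₁−μ₂‖_FM`,
where `⟨f, μG_λ⟩ = ∫_X ∫₀^∞ λ e^{−λt} f(S(t,x)) dt μ(dx)` and the FM norms are suprema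
over test functions `f` bounded by 1 and 1-Lipschitz. -/
theorem stmt_15
    {H : Type*} [NormedAddCommGroup H] [NormedSpace ℝ H] [CompleteSpace H]
    [SecondCountableTopology H] [MeasurableSpace H] [BorelSpace H]
    (X : Set H) (hXc : IsClosed X) (hXne : X.Nonempty)
    (S : ℝ → X → X)
    (hS0 : ∀ x, S 0 x = x)
    (hSadd : ∀ s t : ℝ, 0 ≤ s → 0 ≤ t → ∀ x, S (s + t) x = S s (S t x))
    (hScont : ContinuousOn (fun q : ℝ × X => S q.1 q.2) (Set.Ici 0 ×ˢ Set.univ))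
    (L α : ℝ) (hL : 0 < L)
    (hA2 : ∀ t : ℝ, 0 ≤ t → ∀ x y : X,
      ‖(S t x : H) - S t y‖ ≤ L * Real.exp (α * t) * ‖(x : H) - y‖)
    (l1 l2 : ℝ) (hl1 : max 0 α < l1) (hl2 : max 0 α < l2)
    (μ1 μ2 : Measure X) [IsProbabilityMeasure μ1] [IsProbabilityMeasure μ2] :
    sSup {r : ℝ | ∃ f : X → ℝ, (∀ z, |f z| ≤ 1) ∧ LipschitzWith 1 f ∧
        r = |(∫ x, (∫ t in Set.Ici (0 : ℝ), l1 * Real.exp (-(l1 * t)) * f (S t x)) ∂μ1) -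
             ∫ x, (∫ t in Set.Ici (0 : ℝ), l2 * Real.exp (-(l2 * t)) * f (S t x)) ∂μ2|}
      ≤ |l1 - l2| * (1 / l1 + 1 / l2) +
          (1 + L * l2 / (l2 - α)) *
            sSup {r : ℝ | ∃ f : X → ℝ, (∀ z, |f z| ≤ 1) ∧ LipschitzWith 1 f ∧
              r = |(∫ x, f x ∂μ1) - ∫ x, f x ∂μ2|} := by
  classical
  have hl1p : 0 < l1 := lt_of_le_of_lt (le_max_left 0 α) hl1
  have hl2p : 0 < l2 := lt_of_le_of_lt (le_max_left 0 α) hl2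
  have hl2a : 0 < l2 - α := sub_pos.mpr (lt_of_le_of_lt (le_max_right 0 α) hl2)
  have hl1a : 0 < l1 - α := sub_pos.mpr (lt_of_le_of_lt (le_max_right 0 α) hl1)
  have hK0 : 0 ≤ L * l2 / (l2 - α) := div_nonneg (mul_nonneg hL.le hl2p.le) hl2a.le
  set c : ℝ := 1 + L * l2 / (l2 - α) with hcdef
  have hc0 : 0 < c := by rw [hcdef]; linarith
  set FMset := {r : ℝ | ∃ f : X → ℝ, (∀ z, |f z| ≤ 1) ∧ LipschitzWith 1 f ∧
      r = |(∫ x, f x ∂μ1) - ∫ x, f x ∂μ2|} with hFMset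
  have habs : ∀ (μ : Measure X), IsProbabilityMeasure μ → ∀ (g : X → ℝ),
      (∀ z, |g z| ≤ 1) → |∫ x, g x ∂μ| ≤ 1 := by
    intro μ hμ g hg
    have := norm_integral_le_of_norm_le_const (μ := μ) (f := g) (C := 1)
      (Filter.Eventually.of_forall (fun z => by simpa [Real.norm_eq_abs] using hg z))
    simpa [Real.norm_eq_abs] using this
  have hBdd : BddAbove FMset := by
    refine ⟨2, ?_⟩
    rintro r ⟨f, hfb, hfl, rfl⟩
    calc |(∫ x, f x ∂μ1) - ∫ x, f x ∂μ2| ≤ |∫ x, f x ∂μ1| + |∫ x, f x ∂μ2| := abs_sub _ _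
      _ ≤ 1 + 1 := add_le_add (habs μ1 inferInstance f hfb) (habs μ2 inferInstance f hfb)
      _ = 2 := by norm_num
  have hFM0 : 0 ≤ sSup FMset := by
    refine le_csSup hBdd ?_
    exact ⟨fun _ => 0, fun z => by simp, (LipschitzWith.const 0).weaken zero_le_one, by simp⟩
  have hRHS0 : 0 ≤ |l1 - l2| * (1 / l1 + 1 / l2) + c * sSup FMset := by
    have h1 : 0 ≤ 1 / l1 + 1 / l2 :=
      add_nonneg (one_div_nonneg.mpr hl1p.le) (one_div_nonneg.mpr hl2p.le)
    have h2 := mul_nonneg hc0.le hFM0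
    nlinarith [abs_nonneg (l1 - l2)]
  refine Real.sSup_le ?_ hRHS0
  rintro r ⟨f, hfb, hfl, rfl⟩
  obtain ⟨hInt1, hBd1, hLip1⟩ := g_props X S hScont L α hA2 f hfb hfl l1 hl1
  obtain ⟨hInt2, hBd2, hLip2⟩ := g_props X S hScont L α hA2 f hfb hfl l2 hl2
  set g1 : X → ℝ := fun x => ∫ t in Ici (0:ℝ), l1 * Real.exp (-(l1 * t)) * f (S t x) with hg1def
  set g2 : X → ℝ := fun x => ∫ t in Ici (0:ℝ), l2 * Real.exp (-(l2 * t)) * f (S t x) with hg2def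
  have hglip : ∀ (g : X → ℝ) (Kg : ℝ), 0 ≤ Kg →
      (∀ x y : X, |g x - g y| ≤ Kg * ‖(x:H) - y‖) → Continuous g := by
    intro g Kg hKg hg
    refine (LipschitzWith.of_dist_le_mul (K := Real.toNNReal Kg) (fun x y => ?_)).continuous
    rw [Real.dist_eq, Subtype.dist_eq, dist_eq_norm, Real.coe_toNNReal _ hKg]
    exact hg x y
  have hg1cont : Continuous g1 :=
    hglip g1 _ (div_nonneg (mul_nonneg hL.le hl1p.le) hl1a.le) hLip1
  have hg2cont : Continuous g2 :=
    hglip g2 _ hK0 hLip2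
  have hintg : ∀ (g : X → ℝ), Continuous g → (∀ z, |g z| ≤ 1) →
      ∀ (μ : Measure X), IsProbabilityMeasure μ → Integrable g μ := by
    intro g hgc hgb μ hμ
    refine (integrable_const (1:ℝ)).mono' hgc.aestronglyMeasurable ?_
    exact Filter.Eventually.of_forall fun x => by simpa [Real.norm_eq_abs] using hgb x
  have hg1int : Integrable g1 μ1 := hintg g1 hg1cont hBd1 μ1 inferInstance
  have hg2int1 : Integrable g2 μ1 := hintg g2 hg2cont hBd2 μ1 inferInstance
  have hg2int2 : Integrable g2 μ2 := hintg g2 hg2cont hBd2 μ2 inferInstance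
  have key1 : |(∫ x, g1 x ∂μ1) - ∫ x, g2 x ∂μ1| ≤ |l1 - l2| * (1 / l1 + 1 / l2) := by
    rw [← integral_sub hg1int hg2int1]
    have hpt : ∀ x : X, ‖g1 x - g2 x‖ ≤ |l1 - l2| * (1 / l1 + 1 / l2) := by
      intro x
      rw [Real.norm_eq_abs]
      have hsub : g1 x - g2 x = ∫ t in Ici (0:ℝ),
          (l1 * Real.exp (-(l1 * t)) * f (S t x) - l2 * Real.exp (-(l2 * t)) * f (S t x)) :=
        (integral_sub (hInt1 x) (hInt2 x)).symm
      rw [hsub]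
      calc |∫ t in Ici (0:ℝ),
              (l1 * Real.exp (-(l1 * t)) * f (S t x) - l2 * Real.exp (-(l2 * t)) * f (S t x))|
          ≤ ∫ t in Ici (0:ℝ),
              |l1 * Real.exp (-(l1 * t)) * f (S t x) - l2 * Real.exp (-(l2 * t)) * f (S t x)| :=
            abs_integral_le' _ _
        _ ≤ ∫ t in Ici (0:ℝ), |l1 * Real.exp (-(l1 * t)) - l2 * Real.exp (-(l2 * t))| := by
            refine setIntegral_mono_on ((hInt1 x).sub (hInt2 x)).abs
              ((wexp_int hl1p).sub (wexp_int hl2p)).abs measurableSet_Ici (fun t _ => ?_)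
            rw [show l1 * Real.exp (-(l1 * t)) * f (S t x) - l2 * Real.exp (-(l2 * t)) * f (S t x)
                = (l1 * Real.exp (-(l1 * t)) - l2 * Real.exp (-(l2 * t))) * f (S t x) by ring,
              abs_mul]
            exact mul_le_of_le_one_right (abs_nonneg _) (hfb _)
        _ ≤ |l1 - l2| * (1 / l1 + 1 / l2) := key_absdiff hl1p hl2p
    have := norm_integral_le_of_norm_le_const (μ := μ1) (Filter.Eventually.of_forall hpt)
    simpa [Real.norm_eq_abs] using this
  have key2 : |(∫ x, g2 x ∂μ1) - ∫ x, g2 x ∂μ2| ≤ c * sSup FMset := by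
    set h : X → ℝ := fun x => g2 x / c with hhdef
    have hhb : ∀ z, |h z| ≤ 1 := by
      intro z
      rw [hhdef]
      simp only []
      rw [abs_div, abs_of_pos hc0, div_le_one hc0]
      refine (hBd2 z).trans ?_
      rw [hcdef]; linarith
    have hhl : LipschitzWith 1 h := by
      refine LipschitzWith.of_dist_le_mul (fun x y => ?_)
      rw [Real.dist_eq, Subtype.dist_eq, dist_eq_norm, NNReal.coe_one, one_mul]
      have heq : h x - h y = (g2 x - g2 y) / c := by rw [hhdef]; ring
      rw [heq, abs_div, abs_of_pos hc0, div_le_iff₀ hc0]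
      calc |g2 x - g2 y| ≤ (L * l2 / (l2 - α)) * ‖(x:H) - y‖ := hLip2 x y
        _ ≤ c * ‖(x:H) - y‖ := by
            refine mul_le_mul_of_nonneg_right ?_ (norm_nonneg _)
            rw [hcdef]; linarith
        _ = ‖(x:H) - y‖ * c := mul_comm _ _
    have hmem : |(∫ x, h x ∂μ1) - ∫ x, h x ∂μ2| ∈ FMset := ⟨h, hhb, hhl, rfl⟩
    have hrle := le_csSup hBdd hmem
    have heq2 : (∫ x, g2 x ∂μ1) - ∫ x, g2 x ∂μ2
        = c * ((∫ x, h x ∂μ1) - ∫ x, h x ∂μ2) := by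
      simp only [hhdef, integral_div]
      field_simp
    rw [heq2, abs_mul, abs_of_pos hc0]
    exact mul_le_mul_of_nonneg_left hrle hc0.le
  calc |(∫ x, g1 x ∂μ1) - ∫ x, g2 x ∂μ2|
      ≤ |(∫ x, g1 x ∂μ1) - ∫ x, g2 x ∂μ1| + |(∫ x, g2 x ∂μ1) - ∫ x, g2 x ∂μ2| :=
        abs_sub_le _ _ _
    _ ≤ |l1 - l2| * (1 / l1 + 1 / l2) + c * sSup FMset := add_le_add key1 key2
end

section
/- (Continuous dependence of the invariant measure of the PDMP on the jump rate.) Assume (A2) and let ᾱ := max{0, α}. Let λ̄ > ᾱ, and let (μ_λ) be a family of Borel probability measures on X, indexed by λ in an interval of (ᾱ, ∞) containing λ̄, such that ‖μ_λ − μ_λ̄‖_FM → 0 as λ → λ̄. Define ν_λ := μ_λ G_λ. Then ‖ν_λ − ν_λ̄‖_FM → 0 as λ → λ̄; in particular, ν_λ converges weakly to ν_λ̄, i.e., ∫_X f dν_λ → ∫_X f dν_λ̄ for every bounded continuous f : X → ℝ. -/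
open MeasureTheory Real Filter Set Topology NNReal ENNReal

set_option linter.unusedSectionVars false
set_option linter.unusedVariables false
set_option maxHeartbeats 1000000

section Stmt16Helpers

lemma expd_integrableOn {l : ℝ} (hl : 0 < l) :
    IntegrableOn (fun t => l * Real.exp (-(l * t))) (Set.Ici 0) := by
  have h : IntegrableOn (fun t => Real.exp (-(l * t))) (Set.Ici 0) := by
    rw [integrableOn_Ici_iff_integrableOn_Ioi]
    simpa [neg_mul] using exp_neg_integrableOn_Ioi 0 hl
  exact h.const_mul l

lemma expd_integral {l : ℝ} (hl : 0 < l) :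
    ∫ t in Set.Ici (0:ℝ), l * Real.exp (-(l * t)) = 1 := by
  rw [MeasureTheory.integral_Ici_eq_integral_Ioi, MeasureTheory.integral_const_mul]
  have h := integral_comp_mul_left_Ioi (fun x => Real.exp (-x)) 0 hl
  simp only [mul_zero, smul_eq_mul] at h
  rw [h, integral_exp_neg_Ioi_zero]
  field_simp

lemma expd_nonneg {l : ℝ} (hl : 0 < l) (t : ℝ) : 0 ≤ l * Real.exp (-(l * t)) :=
  mul_nonneg hl.le (Real.exp_pos _).le
lemma J_integrable {l L α : ℝ} (hl : 0 < l) (hα : α < l) :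
    IntegrableOn (fun t => l * Real.exp (-(l * t)) * (L * Real.exp (α * t)))
      (Set.Ici 0) := by
  have h : IntegrableOn (fun t => (l * L) * Real.exp (-((l - α) * t))) (Set.Ici 0) := by
    have h2 : IntegrableOn (fun t => Real.exp (-((l - α) * t))) (Set.Ici 0) := by
      rw [integrableOn_Ici_iff_integrableOn_Ioi]
      exact (exp_neg_integrableOn_Ioi 0 (by linarith : 0 < l - α)).congr_fun
        (fun t _ => by simp only [neg_mul]) measurableSet_Ioi
    exact h2.const_mul (l * L)
  have e : ∀ t : ℝ, l * Real.exp (-(l * t)) * (L * Real.exp (α * t)) =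
      (l * L) * Real.exp (-((l - α) * t)) := fun t => by
    rw [show -((l - α) * t) = -(l * t) + α * t by ring, Real.exp_add]; ring
  exact h.congr_fun (fun t _ => (e t).symm) measurableSet_Ici

section G
variable {Ω : Type*} [MeasurableSpace Ω] [MetricSpace Ω] [OpensMeasurableSpace Ω]
  (T : ℝ → Ω → Ω)

-- measurability of the time integrand
lemma integrand_aesm (hTm : ∀ x : Ω, ContinuousOn (fun t => T t x) (Set.Ici 0))
    (f : Ω → ℝ) (hf : Continuous f) (l : ℝ) (x : Ω) :
    AEStronglyMeasurable (fun t => l * Real.exp (-(l * t)) * f (T t x))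
      (volume.restrict (Set.Ici 0)) := by
  apply ContinuousOn.aestronglyMeasurable _ measurableSet_Ici
  exact ((continuous_const.mul (Real.continuous_exp.comp
    ((continuous_const.mul continuous_id).neg))).continuousOn).mul
    (hf.comp_continuousOn (hTm x))

lemma integrand_integrable (hTm : ∀ x : Ω, ContinuousOn (fun t => T t x) (Set.Ici 0))
    (f : Ω → ℝ) (hf : Continuous f) {C : ℝ} (hfb : ∀ z, |f z| ≤ C)
    {l : ℝ} (hl : 0 < l) (x : Ω) :
    IntegrableOn (fun t => l * Real.exp (-(l * t)) * f (T t x)) (Set.Ici 0) := by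
  apply Integrable.mono' ((expd_integrableOn hl).mul_const C)
    (integrand_aesm T hTm f hf l x)
  refine (ae_restrict_iff' measurableSet_Ici).mpr (ae_of_all _ fun t _ => ?_)
  rw [Real.norm_eq_abs, abs_mul, abs_of_nonneg (expd_nonneg hl t)]
  exact mul_le_mul_of_nonneg_left (hfb _) (expd_nonneg hl t)

lemma g_bound (hTm : ∀ x : Ω, ContinuousOn (fun t => T t x) (Set.Ici 0))
    (f : Ω → ℝ) (hf : Continuous f) {C : ℝ} (hfb : ∀ z, |f z| ≤ C)
    {l : ℝ} (hl : 0 < l) (x : Ω) :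
    |∫ t in Set.Ici (0:ℝ), l * Real.exp (-(l * t)) * f (T t x)| ≤ C := by
  have h := norm_integral_le_of_norm_le
    (f := fun t => l * Real.exp (-(l * t)) * f (T t x))
    ((expd_integrableOn hl).mul_const C)
    ((ae_restrict_iff' measurableSet_Ici).mpr (ae_of_all _ fun t _ => by
      rw [Real.norm_eq_abs, abs_mul, abs_of_nonneg (expd_nonneg hl t)]
      exact mul_le_mul_of_nonneg_left (hfb _) (expd_nonneg hl t)))
  rw [Real.norm_eq_abs] at h
  calc |∫ t in Set.Ici (0:ℝ), l * Real.exp (-(l * t)) * f (T t x)|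
      ≤ ∫ t in Set.Ici (0:ℝ), (l * Real.exp (-(l * t))) * C := h
    _ = (∫ t in Set.Ici (0:ℝ), l * Real.exp (-(l * t))) * C := by
        rw [MeasureTheory.integral_mul_const]
    _ = C := by rw [expd_integral hl, one_mul]

lemma g_continuous (hTm : ∀ x : Ω, ContinuousOn (fun t => T t x) (Set.Ici 0))
    (hTc : ∀ t : ℝ, 0 ≤ t → Continuous (fun x => T t x))
    (f : Ω → ℝ) (hf : Continuous f) {C : ℝ} (hfb : ∀ z, |f z| ≤ C)
    {l : ℝ} (hl : 0 < l) :
    Continuous (fun x => ∫ t in Set.Ici (0:ℝ), l * Real.exp (-(l * t)) * f (T t x)) := by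
  refine continuous_iff_continuousAt.mpr fun x₀ => ?_
  apply tendsto_integral_filter_of_dominated_convergence
    (fun t => (l * Real.exp (-(l * t))) * C)
  · exact Eventually.of_forall fun x => integrand_aesm T hTm f hf l x
  · refine Eventually.of_forall fun x => (ae_restrict_iff' measurableSet_Ici).mpr
      (ae_of_all _ fun t _ => ?_)
    rw [Real.norm_eq_abs, abs_mul, abs_of_nonneg (expd_nonneg hl t)]
    exact mul_le_mul_of_nonneg_left (hfb _) (expd_nonneg hl t)
  · exact (expd_integrableOn hl).mul_const C
  · refine (ae_restrict_iff' measurableSet_Ici).mpr (ae_of_all _ fun t ht => ?_)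
    exact (((hf.comp (hTc t ht)).tendsto x₀).const_mul _)
-- Lipschitz estimate for g with f 1-Lipschitz
lemma g_lip (hTm : ∀ x : Ω, ContinuousOn (fun t => T t x) (Set.Ici 0))
    {L α : ℝ}
    (hT2 : ∀ t : ℝ, 0 ≤ t → ∀ x y : Ω, dist (T t x) (T t y) ≤ L * Real.exp (α * t) * dist x y)
    (f : Ω → ℝ) (hf1 : LipschitzWith 1 f) {C : ℝ} (hfb : ∀ z, |f z| ≤ C)
    {l : ℝ} (hl : 0 < l) (hα : α < l) (x y : Ω) :
    |(∫ t in Set.Ici (0:ℝ), l * Real.exp (-(l * t)) * f (T t x)) -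
      ∫ t in Set.Ici (0:ℝ), l * Real.exp (-(l * t)) * f (T t y)| ≤
    (∫ t in Set.Ici (0:ℝ), l * Real.exp (-(l * t)) * (L * Real.exp (α * t))) * dist x y := by
  have hix := integrand_integrable T hTm f hf1.continuous hfb hl x
  have hiy := integrand_integrable T hTm f hf1.continuous hfb hl y
  rw [← MeasureTheory.integral_sub hix hiy]
  have key : ∀ t : ℝ, t ∈ Set.Ici (0:ℝ) →
      ‖l * Real.exp (-(l * t)) * f (T t x) - l * Real.exp (-(l * t)) * f (T t y)‖ ≤
      (l * Real.exp (-(l * t)) * (L * Real.exp (α * t))) * dist x y := by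
    intro t ht
    rw [← mul_sub, Real.norm_eq_abs, abs_mul, abs_of_nonneg (expd_nonneg hl t)]
    have h1 : |f (T t x) - f (T t y)| ≤ dist (T t x) (T t y) := by
      have := hf1.dist_le_mul (T t x) (T t y)
      rwa [NNReal.coe_one, one_mul, Real.dist_eq] at this
    have h2 := (h1.trans (hT2 t ht x y))
    calc l * Real.exp (-(l * t)) * |f (T t x) - f (T t y)|
        ≤ l * Real.exp (-(l * t)) * (L * Real.exp (α * t) * dist x y) :=
          mul_le_mul_of_nonneg_left h2 (expd_nonneg hl t)
      _ = l * Real.exp (-(l * t)) * (L * Real.exp (α * t)) * dist x y := by ring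
  have h := norm_integral_le_of_norm_le
    (f := fun t => l * Real.exp (-(l * t)) * f (T t x) - l * Real.exp (-(l * t)) * f (T t y))
    (g := fun t => (l * Real.exp (-(l * t)) * (L * Real.exp (α * t))) * dist x y)
    ((J_integrable (L := L) hl hα).mul_const (dist x y))
    ((ae_restrict_iff' measurableSet_Ici).mpr (ae_of_all _ key))
  rw [Real.norm_eq_abs] at h
  calc |∫ t in Set.Ici (0:ℝ), (l * Real.exp (-(l * t)) * f (T t x) -
          l * Real.exp (-(l * t)) * f (T t y))|
      ≤ ∫ t in Set.Ici (0:ℝ), (l * Real.exp (-(l * t)) * (L * Real.exp (α * t))) * dist x y :=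
        h
    _ = _ := by rw [MeasureTheory.integral_mul_const]
-- (6): difference bound in terms of D l
lemma g_diff_bound (hTm : ∀ x : Ω, ContinuousOn (fun t => T t x) (Set.Ici 0))
    (f : Ω → ℝ) (hf : Continuous f) {C : ℝ} (hC : 0 ≤ C) (hfb : ∀ z, |f z| ≤ C)
    {l l' : ℝ} (hl : 0 < l) (hl' : 0 < l') (x : Ω) :
    |(∫ t in Set.Ici (0:ℝ), l * Real.exp (-(l * t)) * f (T t x)) -
      ∫ t in Set.Ici (0:ℝ), l' * Real.exp (-(l' * t)) * f (T t x)| ≤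
    (∫ t in Set.Ici (0:ℝ), |l * Real.exp (-(l * t)) - l' * Real.exp (-(l' * t))|) * C := by
  rw [← MeasureTheory.integral_sub (integrand_integrable T hTm f hf hfb hl x)
    (integrand_integrable T hTm f hf hfb hl' x)]
  have hbint : IntegrableOn
      (fun t => |l * Real.exp (-(l * t)) - l' * Real.exp (-(l' * t))| * C) (Set.Ici 0) :=
    (((expd_integrableOn hl).sub (expd_integrableOn hl')).norm).mul_const C
  have key : ∀ t : ℝ, t ∈ Set.Ici (0:ℝ) →
      ‖l * Real.exp (-(l * t)) * f (T t x) - l' * Real.exp (-(l' * t)) * f (T t x)‖ ≤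
      |l * Real.exp (-(l * t)) - l' * Real.exp (-(l' * t))| * C := by
    intro t _
    rw [← sub_mul, Real.norm_eq_abs, abs_mul]
    exact mul_le_mul_of_nonneg_left (hfb _) (abs_nonneg _)
  have h := norm_integral_le_of_norm_le
    (f := fun t => l * Real.exp (-(l * t)) * f (T t x) - l' * Real.exp (-(l' * t)) * f (T t x))
    (g := fun t => |l * Real.exp (-(l * t)) - l' * Real.exp (-(l' * t))| * C)
    hbint ((ae_restrict_iff' measurableSet_Ici).mpr (ae_of_all _ key))
  rw [Real.norm_eq_abs] at h
  exact h.trans (le_of_eq (MeasureTheory.integral_mul_const _ _))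
end G

-- (7): D tends to 0
lemma D_tendsto {lbar : ℝ} (hlbar : 0 < lbar) (I : Set ℝ) :
    Tendsto (fun l : ℝ => ∫ t in Set.Ici (0:ℝ),
        |l * Real.exp (-(l * t)) - lbar * Real.exp (-(lbar * t))|)
      (nhdsWithin lbar I) (nhds 0) := by
  set m := lbar / 2 with hm
  have hm0 : 0 < m := by positivity
  have hb : IntegrableOn (fun t => 5 * m * Real.exp (-(m * t))) (Set.Ici 0) := by
    have h2 : IntegrableOn (fun t => Real.exp (-(m * t))) (Set.Ici 0) := by
      rw [integrableOn_Ici_iff_integrableOn_Ioi]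
      exact (exp_neg_integrableOn_Ioi 0 hm0).congr_fun (fun t _ => by simp only [neg_mul])
        measurableSet_Ioi
    exact h2.const_mul (5 * m)
  have hev : ∀ᶠ l in nhdsWithin lbar I, |l - lbar| < m :=
    nhdsWithin_le_nhds (eventually_abs_sub_lt lbar hm0)
  have main := tendsto_integral_filter_of_dominated_convergence
    (μ := volume.restrict (Set.Ici 0))
    (F := fun (l : ℝ) (t : ℝ) => |l * Real.exp (-(l * t)) - lbar * Real.exp (-(lbar * t))|)
    (f := fun _ => (0:ℝ)) (l := nhdsWithin lbar I)
    (fun t => 5 * m * Real.exp (-(m * t)))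
    (Eventually.of_forall fun l => by
      apply Continuous.aestronglyMeasurable
      exact ((continuous_const.mul (Real.continuous_exp.comp
        ((continuous_const.mul continuous_id).neg))).sub
        (continuous_const.mul (Real.continuous_exp.comp
        ((continuous_const.mul continuous_id).neg)))).abs)
    (hev.mono fun l hl => (ae_restrict_iff' measurableSet_Ici).mpr (ae_of_all _ fun t ht => by
      have hl0 : 0 < l := by rw [abs_sub_lt_iff] at hl; simp only [hm] at hl; linarith [hl.1, hl.2]
      have hlm : m ≤ l := by rw [abs_sub_lt_iff] at hl; simp only [hm] at hl; linarith [hl.1]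
      have hl3 : l ≤ 3 * m := by rw [abs_sub_lt_iff] at hl; simp only [hm] at hl; linarith [hl.2]
      have ht0 : (0:ℝ) ≤ t := ht
      have e1 : Real.exp (-(l * t)) ≤ Real.exp (-(m * t)) := by
        apply Real.exp_le_exp.mpr; nlinarith
      have e2 : Real.exp (-(lbar * t)) ≤ Real.exp (-(m * t)) := by
        apply Real.exp_le_exp.mpr; nlinarith
      rw [Real.norm_eq_abs, abs_abs]
      have h1 : |l * Real.exp (-(l * t)) - lbar * Real.exp (-(lbar * t))| ≤
          l * Real.exp (-(l * t)) + lbar * Real.exp (-(lbar * t)) := by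
        calc |l * Real.exp (-(l * t)) - lbar * Real.exp (-(lbar * t))| ≤
            |l * Real.exp (-(l * t))| + |lbar * Real.exp (-(lbar * t))| := abs_sub _ _
          _ = _ := by
            rw [abs_of_nonneg (expd_nonneg hl0 t), abs_of_nonneg (expd_nonneg hlbar t)]
      refine h1.trans ?_
      show _ ≤ 5 * m * Real.exp (-(m * t))
      have b1 : l * Real.exp (-(l * t)) ≤ 3 * m * Real.exp (-(m * t)) := by
        apply mul_le_mul hl3 e1 (Real.exp_pos _).le (by linarith)
      have b2 : lbar * Real.exp (-(lbar * t)) ≤ 2 * m * Real.exp (-(m * t)) := by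
        apply mul_le_mul (by rw [hm]; linarith) e2 (Real.exp_pos _).le (by linarith)
      linarith))
    hb
    ((ae_restrict_iff' measurableSet_Ici).mpr (ae_of_all _ fun t ht => by
      have hc : Continuous (fun l : ℝ =>
          |l * Real.exp (-(l * t)) - lbar * Real.exp (-(lbar * t))|) := by
        exact ((continuous_id.mul (Real.continuous_exp.comp
          ((continuous_id.mul continuous_const).neg))).sub continuous_const).abs
      have := (hc.tendsto lbar).mono_left (nhdsWithin_le_nhds (s := I))
      simpa using this))
  simpa using main

lemma h_opens_aux {Ω : Type*} [MeasurableSpace Ω] [MetricSpace Ω] [OpensMeasurableSpace Ω]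
    (μs : ℕ → Measure Ω) (Pb : Measure Ω) [∀ n, IsProbabilityMeasure (μs n)]
    [IsProbabilityMeasure Pb]
    (hTest : ∀ (K : ℝ≥0) (h : Ω → ℝ), (∀ z, |h z| ≤ 1) → LipschitzWith K h →
      Tendsto (fun n => ∫ x, h x ∂(μs n)) atTop (𝓝 (∫ x, h x ∂Pb)))
    {G : Set Ω} (hG : IsOpen G) : Pb G ≤ atTop.liminf (fun n => μs n G) := by
  by_cases hGc : Gᶜ = ∅
  · have hGu : G = univ := by
      rw [← compl_empty_iff, hGc]
    subst hGu
    have : ∀ n, μs n univ = 1 := fun n => measure_univ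
    simp only [this, measure_univ]
    rw [liminf_const]
  · -- Gᶜ nonempty closed
    have hGcne : Gᶜ.Nonempty := Set.nonempty_iff_ne_empty.mpr hGc
    set d : Ω → ℝ := fun x => Metric.infDist x Gᶜ with hd
    set f : ℕ → Ω → ℝ := fun k x => min 1 ((k : ℝ) * d x) with hf
    have hd_nonneg : ∀ x, 0 ≤ d x := fun x => Metric.infDist_nonneg
    have hf_nonneg : ∀ k x, 0 ≤ f k x := fun k x =>
      le_min zero_le_one (mul_nonneg (Nat.cast_nonneg k) (hd_nonneg x))
    have hf_le_one : ∀ k x, f k x ≤ 1 := fun k x => min_le_left _ _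
    have hf_abs : ∀ k x, |f k x| ≤ 1 := fun k x => by
      rw [abs_of_nonneg (hf_nonneg k x)]; exact hf_le_one k x
    have hd_lip : LipschitzWith 1 d := Metric.lipschitz_infDist_pt _
    have hf_lip : ∀ k : ℕ, LipschitzWith (k : ℝ≥0) (f k) := by
      intro k
      have lipk : LipschitzWith (k : ℝ≥0) (fun x => (k:ℝ) * d x) := by
        refine LipschitzWith.of_dist_le_mul fun x y => ?_
        rw [Real.dist_eq, ← mul_sub, abs_mul, abs_of_nonneg (Nat.cast_nonneg k)]
        have h2 := hd_lip.dist_le_mul x y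
        rw [NNReal.coe_one, one_mul, Real.dist_eq] at h2
        have hco : ((k : ℝ≥0) : ℝ) = (k:ℝ) := by norm_num
        rw [hco]
        exact mul_le_mul_of_nonneg_left h2 (Nat.cast_nonneg k)
      have hmin := (LipschitzWith.const (1:ℝ)).min lipk
      simpa [max_eq_right (zero_le : (0:ℝ≥0) ≤ k)] using hmin
    have hf_cont : ∀ k, Continuous (f k) := fun k => (hf_lip k).continuous
    have hf_zero : ∀ k, ∀ x ∉ G, f k x = 0 := by
      intro k x hx
      have : d x = 0 := Metric.infDist_zero_of_mem (by simpa using hx)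
      simp [hf, this, hf_nonneg]
    have hf_int : ∀ (k : ℕ) (ν : Measure Ω) [IsProbabilityMeasure ν], Integrable (f k) ν := by
      intro k ν _
      refine Integrable.mono' (integrable_const 1) (hf_cont k).aestronglyMeasurable
        (ae_of_all _ fun x => ?_)
      rw [Real.norm_eq_abs]; exact hf_abs k x
    -- pointwise bound: ofReal (f k x) ≤ indicator G 1 x
    have hptwise : ∀ (k : ℕ) x, ENNReal.ofReal (f k x) ≤ G.indicator 1 x := by
      intro k x
      by_cases hx : x ∈ G
      · rw [Set.indicator_of_mem hx]
        simpa using ENNReal.ofReal_le_ofReal (hf_le_one k x)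
      · rw [hf_zero k x hx, Set.indicator_of_notMem hx]
        simp
    -- key step for each k
    have key : ∀ k : ℕ, ENNReal.ofReal (∫ x, f k x ∂Pb) ≤ atTop.liminf (fun n => μs n G) := by
      intro k
      have h1 : Tendsto (fun n => ENNReal.ofReal (∫ x, f k x ∂(μs n))) atTop
          (𝓝 (ENNReal.ofReal (∫ x, f k x ∂Pb))) :=
        (ENNReal.continuous_ofReal.tendsto _).comp (hTest _ (f k) (hf_abs k) (hf_lip k))
      rw [← h1.liminf_eq]
      refine liminf_le_liminf (Eventually.of_forall fun n => ?_)
      rw [ofReal_integral_eq_lintegral_ofReal (hf_int k (μs n)) (ae_of_all _ (hf_nonneg k))]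
      calc ∫⁻ x, ENNReal.ofReal (f k x) ∂(μs n) ≤ ∫⁻ x, G.indicator 1 x ∂(μs n) :=
            lintegral_mono (hptwise k)
        _ = μs n G := lintegral_indicator_one hG.measurableSet
    -- sup over k equals Pb G
    have hsup : Pb G = ⨆ k : ℕ, ENNReal.ofReal (∫ x, f k x ∂Pb) := by
      have e1 : ∀ k : ℕ, ENNReal.ofReal (∫ x, f k x ∂Pb) = ∫⁻ x, ENNReal.ofReal (f k x) ∂Pb :=
        fun k => ofReal_integral_eq_lintegral_ofReal (hf_int k Pb) (ae_of_all _ (hf_nonneg k))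
      simp_rw [e1]
      rw [← lintegral_iSup (fun k => ((hf_cont k).measurable).ennreal_ofReal)
        (fun i j hij x => ENNReal.ofReal_le_ofReal
          (min_le_min le_rfl (mul_le_mul_of_nonneg_right (Nat.cast_le.mpr hij) (hd_nonneg x))))]
      have hlim : ∀ x, (⨆ k : ℕ, ENNReal.ofReal (f k x)) = G.indicator 1 x := by
        intro x
        by_cases hx : x ∈ G
        · rw [Set.indicator_of_mem hx]
          have hdx : 0 < d x := by
            rw [hd]
            exact (hG.isClosed_compl.notMem_iff_infDist_pos hGcne).mp (by simpa using hx)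
          obtain ⟨k, hk⟩ := exists_nat_ge (1 / d x)
          have hk1 : (1:ℝ) ≤ (k:ℝ) * d x := by
            rw [div_le_iff₀ hdx] at hk
            linarith
          apply le_antisymm
          · refine iSup_le fun j => ?_
            simpa using ENNReal.ofReal_le_ofReal (hf_le_one j x)
          · refine le_iSup_of_le k ?_
            have : f k x = 1 := min_eq_left hk1
            rw [this]
            simp
        · rw [Set.indicator_of_notMem hx]
          simp [hf_zero _ x hx]
      rw [lintegral_congr hlim, lintegral_indicator_one hG.measurableSet]
    rw [hsup]
    exact iSup_le key

lemma tendsto_integral_of_lipschitz_tests {Ω : Type*} [MeasurableSpace Ω] [MetricSpace Ω]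
    [OpensMeasurableSpace Ω] {ι : Type*} {F : Filter ι} [F.IsCountablyGenerated]
    (P : ι → Measure Ω) (Pb : Measure Ω) [hPi : ∀ i, IsProbabilityMeasure (P i)]
    [IsProbabilityMeasure Pb]
    (hTest : ∀ (K : ℝ≥0) (h : Ω → ℝ), (∀ z, |h z| ≤ 1) → LipschitzWith K h →
      Tendsto (fun i => ∫ x, h x ∂(P i)) F (𝓝 (∫ x, h x ∂Pb)))
    (g : Ω → ℝ) (gc : Continuous g) (C : ℝ) (gb : ∀ z, |g z| ≤ C) :
    Tendsto (fun i => ∫ x, g x ∂(P i)) F (𝓝 (∫ x, g x ∂Pb)) := by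
  refine tendsto_iff_seq_tendsto.mpr fun u hu => ?_
  have hTest' : ∀ (K : ℝ≥0) (h : Ω → ℝ), (∀ z, |h z| ≤ 1) → LipschitzWith K h →
      Tendsto (fun n => ∫ x, h x ∂(P (u n))) atTop (𝓝 (∫ x, h x ∂Pb)) :=
    fun K h h1 h2 => (hTest K h h1 h2).comp hu
  -- probability measures
  let Q : ℕ → ProbabilityMeasure Ω := fun n => ⟨P (u n), hPi (u n)⟩
  let Qb : ProbabilityMeasure Ω := ⟨Pb, inferInstance⟩
  have hQ : Tendsto Q atTop (𝓝 Qb) := by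
    apply tendsto_of_forall_isOpen_le_liminf
    intro G hG
    have hopen := h_opens_aux (fun n => P (u n)) Pb hTest' hG
    -- convert ℝ≥0∞ inequality to ℝ≥0
    have hbdd : IsBoundedUnder (· ≤ ·) atTop (fun n => Q n G) :=
      isBoundedUnder_of ⟨1, fun n => ProbabilityMeasure.apply_le_one (Q n) G⟩
    have aux : (ENNReal.ofNNReal (atTop.liminf fun n => Q n G)) =
        atTop.liminf (fun n => ((Q n G : ℝ≥0) : ℝ≥0∞)) := by
      refine Monotone.map_liminf_of_continuousAt (F := atTop) ENNReal.coe_mono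
        (fun n => Q n G) ENNReal.continuous_coe.continuousAt ?_ ?_
      · exact hbdd.isCoboundedUnder_ge
      · exact isBoundedUnder_of ⟨0, fun n => zero_le⟩
    rw [← ENNReal.coe_le_coe, aux]
    simp only [ProbabilityMeasure.ennreal_coeFn_eq_coeFn_toMeasure]
    exact hopen
  have := ProbabilityMeasure.tendsto_iff_forall_integral_tendsto.mp hQ
    (BoundedContinuousFunction.ofNormedAddCommGroup g gc C
      (fun x => by rw [Real.norm_eq_abs]; exact gb x))
  exact this


end Stmt16Helpers

/-- (Continuous dependence of the invariant measure of the PDMP on the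
jump rate.)  Assume (A2), let `ᾱ = max{0,α}` and let `λ̄ > ᾱ`.  Let `(μ_λ)` be a family of
Borel probability measures on `X`, indexed by an interval `I ⊆ (ᾱ,∞)` containing `λ̄`,
with `‖μ_λ − μ_λ̄‖_FM → 0` as `λ → λ̄`.  Put `ν_λ := μ_λ G_λ`, i.e.
`⟨f, ν_λ⟩ = ∫_X ∫₀^∞ λ e^{−λt} f(S(t,x)) dt μ_λ(dx)`.  Then `‖ν_λ − ν_λ̄‖_FM → 0` as
`λ → λ̄`; in particular `ν_λ → ν_λ̄` weakly. -/
theorem stmt_16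
    {H : Type*} [NormedAddCommGroup H] [NormedSpace ℝ H] [CompleteSpace H]
    [SecondCountableTopology H] [MeasurableSpace H] [BorelSpace H]
    (X : Set H) (hXc : IsClosed X) (hXne : X.Nonempty)
    (S : ℝ → X → X)
    (hS0 : ∀ x, S 0 x = x)
    (hSadd : ∀ s t : ℝ, 0 ≤ s → 0 ≤ t → ∀ x, S (s + t) x = S s (S t x))
    (hScont : ContinuousOn (fun q : ℝ × X => S q.1 q.2) (Set.Ici 0 ×ˢ Set.univ))
    (L α : ℝ) (hL : 0 < L)
    (hA2 : ∀ t : ℝ, 0 ≤ t → ∀ x y : X,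
      ‖(S t x : H) - S t y‖ ≤ L * Real.exp (α * t) * ‖(x : H) - y‖)
    -- an interval I of (ᾱ, ∞) containing λ̄
    (I : Set ℝ) (hIint : I.OrdConnected) (hIsub : I ⊆ Set.Ioi (max 0 α))
    (lbar : ℝ) (hlbar : lbar ∈ I)
    -- the family of probability measures, FM-continuous at λ̄
    (μ : ℝ → Measure X) (hprob : ∀ l ∈ I, IsProbabilityMeasure (μ l))
    (hμconv : Tendsto (fun l : ℝ =>
        sSup {r : ℝ | ∃ f : X → ℝ, (∀ z, |f z| ≤ 1) ∧ LipschitzWith 1 f ∧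
          r = |(∫ x, f x ∂(μ l)) - ∫ x, f x ∂(μ lbar)|})
      (nhdsWithin lbar I) (nhds 0)) :
    -- FM convergence of ν_λ = μ_λ G_λ to ν_λ̄ ...
    Tendsto (fun l : ℝ =>
        sSup {r : ℝ | ∃ f : X → ℝ, (∀ z, |f z| ≤ 1) ∧ LipschitzWith 1 f ∧
          r = |(∫ x, (∫ t in Set.Ici (0 : ℝ), l * Real.exp (-(l * t)) * f (S t x)) ∂(μ l)) -
               ∫ x, (∫ t in Set.Ici (0 : ℝ),
                  lbar * Real.exp (-(lbar * t)) * f (S t x)) ∂(μ lbar)|})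
      (nhdsWithin lbar I) (nhds 0) ∧
    -- ... and in particular weak convergence of ν_λ to ν_λ̄
    (∀ f : X → ℝ, Continuous f → (∃ C : ℝ, ∀ z, |f z| ≤ C) →
      Tendsto (fun l : ℝ =>
          ∫ x, (∫ t in Set.Ici (0 : ℝ), l * Real.exp (-(l * t)) * f (S t x)) ∂(μ l))
        (nhdsWithin lbar I)
        (nhds (∫ x, (∫ t in Set.Ici (0 : ℝ),
            lbar * Real.exp (-(lbar * t)) * f (S t x)) ∂(μ lbar)))) := by
  classical
  have hlbar' : max 0 α < lbar := hIsub hlbar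
  have hl0 : 0 < lbar := lt_of_le_of_lt (le_max_left 0 α) hlbar'
  have hlα : α < lbar := lt_of_le_of_lt (le_max_right 0 α) hlbar'
  have hIpos : ∀ l ∈ I, 0 < l := fun l hl =>
    lt_of_le_of_lt (le_max_left 0 α) (hIsub hl)
  have hIα : ∀ l ∈ I, α < l := fun l hl =>
    lt_of_le_of_lt (le_max_right 0 α) (hIsub hl)
  haveI hPb : IsProbabilityMeasure (μ lbar) := hprob lbar hlbar
  have hTm : ∀ x : X, ContinuousOn (fun t => S t x) (Set.Ici 0) := fun x =>
    hScont.comp ((continuous_id.prodMk continuous_const).continuousOn)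
      (fun t ht => ⟨ht, trivial⟩)
  have hT2 : ∀ t : ℝ, 0 ≤ t → ∀ x y : X,
      dist (S t x) (S t y) ≤ L * Real.exp (α * t) * dist x y := by
    intro t ht x y
    rw [Subtype.dist_eq, dist_eq_norm, Subtype.dist_eq, dist_eq_norm]
    exact hA2 t ht x y
  have hTc : ∀ t : ℝ, 0 ≤ t → Continuous (fun x : X => S t x) := by
    intro t ht
    refine (LipschitzWith.of_dist_le_mul
      (K := (L * Real.exp (α * t)).toNNReal) fun x y => ?_).continuous
    rw [Real.coe_toNNReal _ (by positivity)]
    exact hT2 t ht x y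
  -- bound on difference of integrals against a probability measure
  have habs_int : ∀ (ν : Measure X) [IsProbabilityMeasure ν] (h : X → ℝ) (c : ℝ),
      (∀ z, |h z| ≤ c) → |∫ x, h x ∂ν| ≤ c := by
    intro ν hν h c hb
    haveI := hν
    have h2 := norm_integral_le_of_norm_le (μ := ν) (f := h) (g := fun _ => c)
      (integrable_const c)
      (ae_of_all _ fun x => by rw [Real.norm_eq_abs]; exact hb x)
    rwa [Real.norm_eq_abs, integral_const, probReal_univ, one_smul] at h2
  -- FM sup facts for the hypothesis family
  have hΦbdd : ∀ l ∈ I, BddAbove {r : ℝ | ∃ f : X → ℝ, (∀ z, |f z| ≤ 1) ∧ LipschitzWith 1 f ∧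
      r = |(∫ x, f x ∂(μ l)) - ∫ x, f x ∂(μ lbar)|} := by
    intro l hl
    haveI := hprob l hl
    refine ⟨2, fun r hr => ?_⟩
    obtain ⟨f, h1, -, rfl⟩ := hr
    calc |(∫ x, f x ∂(μ l)) - ∫ x, f x ∂(μ lbar)|
        ≤ |∫ x, f x ∂(μ l)| + |∫ x, f x ∂(μ lbar)| := abs_sub _ _
      _ ≤ 1 + 1 := add_le_add (habs_int _ f 1 h1) (habs_int _ f 1 h1)
      _ = 2 := by norm_num
  have hΦ0 : ∀ l : ℝ, (0:ℝ) ∈ {r : ℝ | ∃ f : X → ℝ, (∀ z, |f z| ≤ 1) ∧ LipschitzWith 1 f ∧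
      r = |(∫ x, f x ∂(μ l)) - ∫ x, f x ∂(μ lbar)|} := fun l =>
    ⟨fun _ => 0, fun z => by simp, (LipschitzWith.const 0).weaken zero_le_one, by simp⟩
  have hΦnonneg : ∀ l ∈ I, (0:ℝ) ≤ sSup {r : ℝ | ∃ f : X → ℝ, (∀ z, |f z| ≤ 1) ∧
      LipschitzWith 1 f ∧ r = |(∫ x, f x ∂(μ l)) - ∫ x, f x ∂(μ lbar)|} :=
    fun l hl => le_csSup (hΦbdd l hl) (hΦ0 l)
  have hΦle : ∀ l ∈ I, ∀ h : X → ℝ, (∀ z, |h z| ≤ 1) → LipschitzWith 1 h →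
      |(∫ x, h x ∂(μ l)) - ∫ x, h x ∂(μ lbar)| ≤ sSup {r : ℝ | ∃ f : X → ℝ,
        (∀ z, |f z| ≤ 1) ∧ LipschitzWith 1 f ∧
        r = |(∫ x, f x ∂(μ l)) - ∫ x, f x ∂(μ lbar)|} :=
    fun l hl h h1 h2 => le_csSup (hΦbdd l hl) ⟨h, h1, h2, rfl⟩
  -- scaling trick
  have hscale : ∀ (c : ℝ), 1 ≤ c → ∀ (h : X → ℝ), (∀ z, |h z| ≤ 1) →
      (∀ x y : X, |h x - h y| ≤ c * dist x y) → ∀ l ∈ I,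
      |(∫ x, h x ∂(μ l)) - ∫ x, h x ∂(μ lbar)| ≤ c * sSup {r : ℝ | ∃ f : X → ℝ,
        (∀ z, |f z| ≤ 1) ∧ LipschitzWith 1 f ∧
        r = |(∫ x, f x ∂(μ l)) - ∫ x, f x ∂(μ lbar)|} := by
    intro c hc h hb hlip l hl
    have hc0 : 0 < c := lt_of_lt_of_le one_pos hc
    have h'b : ∀ z, |h z / c| ≤ 1 := fun z => by
      rw [abs_div, abs_of_pos hc0, div_le_one hc0]
      exact (hb z).trans hc
    have h'lip : LipschitzWith 1 (fun x => h x / c) := by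
      refine LipschitzWith.of_dist_le_mul fun x y => ?_
      rw [NNReal.coe_one, one_mul, Real.dist_eq, div_sub_div_same, abs_div,
        abs_of_pos hc0, div_le_iff₀ hc0]
      calc |h x - h y| ≤ c * dist x y := hlip x y
        _ = dist x y * c := by ring
    have key := hΦle l hl _ h'b h'lip
    have e : (∫ x, h x / c ∂(μ l)) - ∫ x, h x / c ∂(μ lbar)
        = ((∫ x, h x ∂(μ l)) - ∫ x, h x ∂(μ lbar)) / c := by
      rw [integral_div, integral_div, div_sub_div_same]
    rw [e, abs_div, abs_of_pos hc0, div_le_iff₀ hc0] at key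
    calc |(∫ x, h x ∂(μ l)) - ∫ x, h x ∂(μ lbar)| ≤ _ * c := key
      _ = c * _ := by ring
  -- tendsto of integrals of Lipschitz test functions
  have hLip : ∀ (Kc : ℝ≥0) (h : X → ℝ), (∀ z, |h z| ≤ 1) → LipschitzWith Kc h →
      Tendsto (fun l => ∫ x, h x ∂(μ l)) (nhdsWithin lbar I)
        (𝓝 (∫ x, h x ∂(μ lbar))) := by
    intro Kc h hb hlip
    set c : ℝ := max (Kc:ℝ) 1 with hcdef
    have hc1 : (1:ℝ) ≤ c := le_max_right _ _
    have hlip' : ∀ x y : X, |h x - h y| ≤ c * dist x y := fun x y => by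
      have h2 := hlip.dist_le_mul x y
      rw [Real.dist_eq] at h2
      exact h2.trans (mul_le_mul_of_nonneg_right (le_max_left _ _) dist_nonneg)
    have hb2 : ∀ᶠ l in nhdsWithin lbar I,
        ‖(∫ x, h x ∂(μ l)) - ∫ x, h x ∂(μ lbar)‖ ≤ c * sSup {r : ℝ | ∃ f : X → ℝ,
          (∀ z, |f z| ≤ 1) ∧ LipschitzWith 1 f ∧
          r = |(∫ x, f x ∂(μ l)) - ∫ x, f x ∂(μ lbar)|} :=
      eventually_mem_nhdsWithin.mono fun l hl => by
        rw [Real.norm_eq_abs]; exact hscale c hc1 h hb hlip' l hl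
    have h0 : Tendsto (fun l => (∫ x, h x ∂(μ l)) - ∫ x, h x ∂(μ lbar))
        (nhdsWithin lbar I) (𝓝 0) :=
      squeeze_zero_norm' hb2 (by simpa using hμconv.const_mul c)
    have := tendsto_sub_nhds_zero_iff.mp h0
    exact this
  -- weak convergence of μ_l against an arbitrary bounded continuous function
  have hWeak : ∀ (g : X → ℝ), Continuous g → ∀ C : ℝ, (∀ z, |g z| ≤ C) →
      Tendsto (fun l => ∫ x, g x ∂(μ l)) (nhdsWithin lbar I)
        (𝓝 (∫ x, g x ∂(μ lbar))) := by
    intro g gc C gb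
    set P : ℝ → Measure X := fun l => if l ∈ I then μ l else μ lbar with hPdef
    haveI hPi : ∀ l, IsProbabilityMeasure (P l) := fun l => by
      by_cases hl : l ∈ I
      · simp only [hPdef, if_pos hl]; exact hprob l hl
      · simp only [hPdef, if_neg hl]; exact hPb
    have hev : ∀ᶠ l in nhdsWithin lbar I, P l = μ l :=
      eventually_mem_nhdsWithin.mono fun l hl => by simp only [hPdef, if_pos hl]
    have hTest : ∀ (Kc : ℝ≥0) (h : X → ℝ), (∀ z, |h z| ≤ 1) → LipschitzWith Kc h →
        Tendsto (fun l => ∫ x, h x ∂(P l)) (nhdsWithin lbar I)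
          (𝓝 (∫ x, h x ∂(μ lbar))) := by
      intro Kc h hb hlip
      exact (hLip Kc h hb hlip).congr'
        (hev.mono fun l hl => congrArg (fun m : Measure X => ∫ x, h x ∂m) hl.symm)
    have hmain := tendsto_integral_of_lipschitz_tests P (μ lbar) hTest g gc C gb
    exact hmain.congr'
      (hev.mono fun l hl => congrArg (fun m : Measure X => ∫ x, g x ∂m) hl)
  -- the D function
  have hD : Tendsto (fun l : ℝ => ∫ t in Set.Ici (0:ℝ),
      |l * Real.exp (-(l * t)) - lbar * Real.exp (-(lbar * t))|)
      (nhdsWithin lbar I) (𝓝 0) := D_tendsto hl0 I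
  have hDnonneg : ∀ l : ℝ, (0:ℝ) ≤ ∫ t in Set.Ici (0:ℝ),
      |l * Real.exp (-(l * t)) - lbar * Real.exp (-(lbar * t))| := fun l =>
    setIntegral_nonneg measurableSet_Ici (fun t _ => abs_nonneg _)
  constructor
  · -- FM convergence part
    have lower : ∀ᶠ l in nhdsWithin lbar I, (0:ℝ) ≤ sSup {r : ℝ | ∃ f : X → ℝ,
        (∀ z, |f z| ≤ 1) ∧ LipschitzWith 1 f ∧
        r = |(∫ x, (∫ t in Set.Ici (0 : ℝ), l * Real.exp (-(l * t)) * f (S t x)) ∂(μ l)) -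
             ∫ x, (∫ t in Set.Ici (0 : ℝ),
                lbar * Real.exp (-(lbar * t)) * f (S t x)) ∂(μ lbar)|} := by
      refine eventually_mem_nhdsWithin.mono fun l hl => ?_
      haveI := hprob l hl
      have hl0' := hIpos l hl
      have hbdd : BddAbove {r : ℝ | ∃ f : X → ℝ,
          (∀ z, |f z| ≤ 1) ∧ LipschitzWith 1 f ∧
          r = |(∫ x, (∫ t in Set.Ici (0 : ℝ), l * Real.exp (-(l * t)) * f (S t x)) ∂(μ l)) -
               ∫ x, (∫ t in Set.Ici (0 : ℝ),
                  lbar * Real.exp (-(lbar * t)) * f (S t x)) ∂(μ lbar)|} := by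
        refine ⟨2, fun r hr => ?_⟩
        obtain ⟨f, h1, hlip, rfl⟩ := hr
        have b1 := habs_int (μ l) _ 1
          (fun x => g_bound S hTm f hlip.continuous h1 hl0' x)
        have b2 := habs_int (μ lbar) _ 1
          (fun x => g_bound S hTm f hlip.continuous h1 hl0 x)
        calc |(∫ x, (∫ t in Set.Ici (0 : ℝ), l * Real.exp (-(l * t)) * f (S t x)) ∂(μ l)) -
               ∫ x, (∫ t in Set.Ici (0 : ℝ),
                  lbar * Real.exp (-(lbar * t)) * f (S t x)) ∂(μ lbar)|
            ≤ |∫ x, (∫ t in Set.Ici (0 : ℝ), l * Real.exp (-(l * t)) * f (S t x)) ∂(μ l)| +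
              |∫ x, (∫ t in Set.Ici (0 : ℝ),
                  lbar * Real.exp (-(lbar * t)) * f (S t x)) ∂(μ lbar)| := abs_sub _ _
          _ ≤ 1 + 1 := add_le_add b1 b2
          _ = 2 := by norm_num
      exact le_csSup hbdd ⟨fun _ => 0, fun z => by simp,
        (LipschitzWith.const 0).weaken zero_le_one, by simp⟩
    have upper : ∀ᶠ l in nhdsWithin lbar I, sSup {r : ℝ | ∃ f : X → ℝ,
        (∀ z, |f z| ≤ 1) ∧ LipschitzWith 1 f ∧
        r = |(∫ x, (∫ t in Set.Ici (0 : ℝ), l * Real.exp (-(l * t)) * f (S t x)) ∂(μ l)) -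
             ∫ x, (∫ t in Set.Ici (0 : ℝ),
                lbar * Real.exp (-(lbar * t)) * f (S t x)) ∂(μ lbar)|} ≤
        (∫ t in Set.Ici (0:ℝ), |l * Real.exp (-(l * t)) - lbar * Real.exp (-(lbar * t))|) +
        (max 1 (∫ t in Set.Ici (0:ℝ),
            lbar * Real.exp (-(lbar * t)) * (L * Real.exp (α * t)))) *
          sSup {r : ℝ | ∃ f : X → ℝ, (∀ z, |f z| ≤ 1) ∧ LipschitzWith 1 f ∧
            r = |(∫ x, f x ∂(μ l)) - ∫ x, f x ∂(μ lbar)|} := by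
      refine eventually_mem_nhdsWithin.mono fun l hl => ?_
      haveI := hprob l hl
      have hl0' := hIpos l hl
      set K0 : ℝ := ∫ t in Set.Ici (0:ℝ),
        lbar * Real.exp (-(lbar * t)) * (L * Real.exp (α * t)) with hK0def
      set K : ℝ := max 1 K0 with hKdef
      have hK1 : (1:ℝ) ≤ K := le_max_left _ _
      have hKpos : (0:ℝ) < K := lt_of_lt_of_le one_pos hK1
      refine Real.sSup_le (fun r hr => ?_)
        (add_nonneg (hDnonneg l) (mul_nonneg hKpos.le (hΦnonneg l hl)))
      obtain ⟨f, h1, hlip, rfl⟩ := hr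
      have fc := hlip.continuous
      have hint1 : Integrable (fun x : X =>
          ∫ t in Set.Ici (0:ℝ), l * Real.exp (-(l * t)) * f (S t x)) (μ l) :=
        Integrable.mono' (integrable_const 1)
          (g_continuous S hTm hTc f fc h1 hl0').aestronglyMeasurable
          (ae_of_all _ fun x => by
            rw [Real.norm_eq_abs]; exact g_bound S hTm f fc h1 hl0' x)
      have hint2 : Integrable (fun x : X =>
          ∫ t in Set.Ici (0:ℝ), lbar * Real.exp (-(lbar * t)) * f (S t x)) (μ l) :=
        Integrable.mono' (integrable_const 1)
          (g_continuous S hTm hTc f fc h1 hl0).aestronglyMeasurable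
          (ae_of_all _ fun x => by
            rw [Real.norm_eq_abs]; exact g_bound S hTm f fc h1 hl0 x)
      have hAM : |(∫ x, (∫ t in Set.Ici (0:ℝ), l * Real.exp (-(l * t)) * f (S t x)) ∂(μ l)) -
          ∫ x, (∫ t in Set.Ici (0:ℝ), lbar * Real.exp (-(lbar * t)) * f (S t x)) ∂(μ l)| ≤
          ∫ t in Set.Ici (0:ℝ),
            |l * Real.exp (-(l * t)) - lbar * Real.exp (-(lbar * t))| := by
        rw [← integral_sub hint1 hint2]
        have h2 := norm_integral_le_of_norm_le (μ := μ l)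
          (g := fun _ : X => (∫ t in Set.Ici (0:ℝ),
            |l * Real.exp (-(l * t)) - lbar * Real.exp (-(lbar * t))|) * 1)
          (integrable_const _)
          (ae_of_all _ fun x => by
            rw [Real.norm_eq_abs]
            exact g_diff_bound S hTm f fc zero_le_one h1 hl0' hl0 x)
        rwa [integral_const, probReal_univ, one_smul, mul_one,
          Real.norm_eq_abs] at h2
      have hMB : |(∫ x, (∫ t in Set.Ici (0:ℝ),
            lbar * Real.exp (-(lbar * t)) * f (S t x)) ∂(μ l)) -
          ∫ x, (∫ t in Set.Ici (0:ℝ),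
            lbar * Real.exp (-(lbar * t)) * f (S t x)) ∂(μ lbar)| ≤
          K * sSup {r : ℝ | ∃ f : X → ℝ, (∀ z, |f z| ≤ 1) ∧ LipschitzWith 1 f ∧
            r = |(∫ x, f x ∂(μ l)) - ∫ x, f x ∂(μ lbar)|} := by
        have gb1 : ∀ z : X, |(∫ t in Set.Ici (0:ℝ),
            lbar * Real.exp (-(lbar * t)) * f (S t z))| ≤ 1 :=
          fun z => g_bound S hTm f fc h1 hl0 z
        have glip : ∀ x y : X, |(∫ t in Set.Ici (0:ℝ),
            lbar * Real.exp (-(lbar * t)) * f (S t x)) -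
            ∫ t in Set.Ici (0:ℝ), lbar * Real.exp (-(lbar * t)) * f (S t y)| ≤
            K * dist x y := by
          intro x y
          have hg := g_lip S hTm hT2 f hlip h1 hl0 hlα x y
          rw [← hK0def] at hg
          exact hg.trans (mul_le_mul_of_nonneg_right (le_max_right 1 K0) dist_nonneg)
        exact hscale K hK1 _ gb1 glip l hl
      calc |(∫ x, (∫ t in Set.Ici (0:ℝ), l * Real.exp (-(l * t)) * f (S t x)) ∂(μ l)) -
             ∫ x, (∫ t in Set.Ici (0:ℝ),
                lbar * Real.exp (-(lbar * t)) * f (S t x)) ∂(μ lbar)|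
          ≤ |(∫ x, (∫ t in Set.Ici (0:ℝ), l * Real.exp (-(l * t)) * f (S t x)) ∂(μ l)) -
              ∫ x, (∫ t in Set.Ici (0:ℝ),
                lbar * Real.exp (-(lbar * t)) * f (S t x)) ∂(μ l)| +
            |(∫ x, (∫ t in Set.Ici (0:ℝ),
                lbar * Real.exp (-(lbar * t)) * f (S t x)) ∂(μ l)) -
              ∫ x, (∫ t in Set.Ici (0:ℝ),
                lbar * Real.exp (-(lbar * t)) * f (S t x)) ∂(μ lbar)| := abs_sub_le _ _ _
        _ ≤ _ := add_le_add hAM hMB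
    have hupperT : Tendsto (fun l : ℝ =>
        (∫ t in Set.Ici (0:ℝ), |l * Real.exp (-(l * t)) - lbar * Real.exp (-(lbar * t))|) +
        (max 1 (∫ t in Set.Ici (0:ℝ),
            lbar * Real.exp (-(lbar * t)) * (L * Real.exp (α * t)))) *
          sSup {r : ℝ | ∃ f : X → ℝ, (∀ z, |f z| ≤ 1) ∧ LipschitzWith 1 f ∧
            r = |(∫ x, f x ∂(μ l)) - ∫ x, f x ∂(μ lbar)|})
        (nhdsWithin lbar I) (𝓝 0) := by
      have := hD.add (hμconv.const_mul (max 1 (∫ t in Set.Ici (0:ℝ),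
        lbar * Real.exp (-(lbar * t)) * (L * Real.exp (α * t)))))
      simpa using this
    exact tendsto_of_tendsto_of_tendsto_of_le_of_le' tendsto_const_nhds hupperT lower upper
  · -- weak convergence part
    rintro f fc ⟨C, hC⟩
    set C' : ℝ := max C 0 with hC'def
    have hC'0 : (0:ℝ) ≤ C' := le_max_right _ _
    have hfb : ∀ z, |f z| ≤ C' := fun z => (hC z).trans (le_max_left _ _)
    have gbc : Continuous (fun x : X =>
        ∫ t in Set.Ici (0:ℝ), lbar * Real.exp (-(lbar * t)) * f (S t x)) :=
      g_continuous S hTm hTc f fc hfb hl0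
    have gbb := fun x => g_bound S hTm f fc hfb hl0 x
    have hE := hWeak _ gbc C' gbb
    have hB : Tendsto (fun l =>
        (∫ x, (∫ t in Set.Ici (0:ℝ), l * Real.exp (-(l * t)) * f (S t x)) ∂(μ l)) -
        ∫ x, (∫ t in Set.Ici (0:ℝ), lbar * Real.exp (-(lbar * t)) * f (S t x)) ∂(μ l))
        (nhdsWithin lbar I) (𝓝 0) := by
      apply squeeze_zero_norm' (a := fun l => (∫ t in Set.Ici (0:ℝ),
        |l * Real.exp (-(l * t)) - lbar * Real.exp (-(lbar * t))|) * C')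
      · refine eventually_mem_nhdsWithin.mono fun l hl => ?_
        haveI := hprob l hl
        have hl0' := hIpos l hl
        have hint1 : Integrable (fun x : X =>
            ∫ t in Set.Ici (0:ℝ), l * Real.exp (-(l * t)) * f (S t x)) (μ l) :=
          Integrable.mono' (integrable_const C')
            (g_continuous S hTm hTc f fc hfb hl0').aestronglyMeasurable
            (ae_of_all _ fun x => by
              rw [Real.norm_eq_abs]; exact g_bound S hTm f fc hfb hl0' x)
        have hint2 : Integrable (fun x : X =>
            ∫ t in Set.Ici (0:ℝ), lbar * Real.exp (-(lbar * t)) * f (S t x)) (μ l) :=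
          Integrable.mono' (integrable_const C') gbc.aestronglyMeasurable
            (ae_of_all _ fun x => by rw [Real.norm_eq_abs]; exact gbb x)
        rw [← integral_sub hint1 hint2]
        have h2 := norm_integral_le_of_norm_le (μ := μ l)
          (g := fun _ : X => (∫ t in Set.Ici (0:ℝ),
            |l * Real.exp (-(l * t)) - lbar * Real.exp (-(lbar * t))|) * C')
          (integrable_const _)
          (ae_of_all _ fun x => by
            rw [Real.norm_eq_abs]
            exact g_diff_bound S hTm f fc hC'0 hfb hl0' hl0 x)
        rwa [integral_const, probReal_univ, one_smul] at h2
      · simpa using hD.mul_const C'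
    have hsum := hB.add hE
    rw [zero_add] at hsum
    refine hsum.congr (fun l => by ring)
end
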